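/- arXiv:1807.09308 — 2 statements merged into one kernel-verified Lean document; each statement's English description precedes it below -/
import Mathlib

section
/- Let p be a prime, n ≥ 1, and T ∈ GL(n, ℚ_p). If the map T̄ : S_n → S_n is distal, then there exists a compact open subgroup V of the additive group ℚ_p^n such that for every a ∈ V \ {0} one has ‖T^{-1}(a)‖_p < 1, the map T̄_a : S_n → S_n is a homeomorphism, and T̄_a is distal. -/
open scoped MatrixGroups

/-- The real number `r`, assumed to be an integer power of `p`, interpreted as the
corresponding scalar in `ℚ_p` (junk value otherwise). -/
noncomputable def realToPadic (p : ℕ) [Fact p.Prime] (r : ℝ) : ℚ_[p] :=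
  (p : ℚ_[p]) ^ ⌊Real.logb p r⌋

/-- The map `T̄` induced on the `p`-adic unit sphere by the matrix `T`:
`T̄(x) = ‖T(x)‖_p ⬝ T(x)`. -/
noncomputable def sphereMap (p : ℕ) [Fact p.Prime] {n : ℕ}
    (T : Matrix (Fin n) (Fin n) ℚ_[p]) (y : Fin n → ℚ_[p]) : Fin n → ℚ_[p] :=
  realToPadic p ‖T.mulVec y‖ • T.mulVec y

/-- The `affine` map `T̄_a` on the `p`-adic unit sphere:
`T̄_a(x) = ‖a + T(x)‖_p ⬝ (a + T(x))`. -/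
noncomputable def affineSphereMap (p : ℕ) [Fact p.Prime] {n : ℕ}
    (T : Matrix (Fin n) (Fin n) ℚ_[p]) (a : Fin n → ℚ_[p]) (y : Fin n → ℚ_[p]) :
    Fin n → ℚ_[p] :=
  realToPadic p ‖a + T.mulVec y‖ • (a + T.mulVec y)

/-- A family `S` of self-maps of a topological space `X` acts distally. -/
def ActsDistally {X : Type*} [TopologicalSpace X] (S : Set (X → X)) : Prop :=
  ∀ x y : X, x ≠ y → ∀ d : X, (d, d) ∉ closure ((fun f => (f x, f y)) '' S)

/-- A family `S` of self-maps acts distally on an invariant subset `A`. -/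
def ActsDistallyOn {X : Type*} [TopologicalSpace X] (S : Set (X → X)) (A : Set X) : Prop :=
  ∀ x ∈ A, ∀ y ∈ A, x ≠ y → ∀ d ∈ A, (d, d) ∉ closure ((fun f => (f x, f y)) '' S)

/-! ### Auxiliary development -/

namespace Stmt15Aux

variable {p : ℕ} [hp : Fact p.Prime] {n : ℕ}

lemma p_real_gt_one : (1:ℝ) < (p:ℝ) := by exact_mod_cast hp.out.one_lt

lemma p_real_pos : (0:ℝ) < (p:ℝ) := lt_trans one_pos p_real_gt_one

lemma realToPadic_eq (r : ℝ) (s : ℤ) (h : r = (p:ℝ)^s) : realToPadic p r = (p:ℚ_[p])^s := by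
  unfold realToPadic
  congr 1
  rw [h, Real.logb, Real.log_zpow]
  rw [mul_div_assoc, div_self (ne_of_gt (Real.log_pos p_real_gt_one)), mul_one,
    Int.floor_intCast]

lemma norm_p_zpow (s : ℤ) : ‖((p:ℚ_[p]))^s‖ = (p:ℝ)^(-s) := Padic.norm_p_zpow s

lemma p_zpow_ne_zero (s : ℤ) : ((p:ℚ_[p]))^s ≠ 0 :=
  zpow_ne_zero s (by exact_mod_cast hp.out.ne_zero)

/-- every nonzero vector has norm an integer power of p -/
lemma exists_norm_zpow (x : Fin n → ℚ_[p]) (hx : x ≠ 0) : ∃ s : ℤ, ‖x‖ = (p:ℝ)^s := by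
  have hnorm : ‖x‖ = ((Finset.univ.sup fun i => ‖x i‖₊ : NNReal) : ℝ) := Pi.norm_def x
  have hne : (Finset.univ : Finset (Fin n)).Nonempty := by
    by_contra h
    apply hx
    funext i
    exact absurd (Finset.mem_univ i) (fun hh => h ⟨i, hh⟩)
  obtain ⟨i, _, hi⟩ := Finset.exists_mem_eq_sup Finset.univ hne fun i => ‖x i‖₊
  have hxi : ‖x‖ = ‖x i‖ := by rw [hnorm, hi]; rfl
  have hxi0 : x i ≠ 0 := by
    intro h0
    apply hx
    have : ‖x‖ = 0 := by rw [hxi, h0, norm_zero]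
    exact norm_eq_zero.mp this
  refine ⟨-(x i).valuation, ?_⟩
  rw [hxi, Padic.norm_eq_zpow_neg_valuation hxi0]

/-- normalization map -/
noncomputable def nrm (p : ℕ) [Fact p.Prime] {n : ℕ} (w : Fin n → ℚ_[p]) : Fin n → ℚ_[p] :=
  realToPadic p ‖w‖ • w

lemma nrm_spec (w : Fin n → ℚ_[p]) (hw : w ≠ 0) :
    ∃ s : ℤ, ‖w‖ = (p:ℝ)^s ∧ realToPadic p ‖w‖ = (p:ℚ_[p])^s := by
  obtain ⟨s, hs⟩ := exists_norm_zpow w hw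
  exact ⟨s, hs, realToPadic_eq _ s hs⟩

lemma norm_nrm (w : Fin n → ℚ_[p]) (hw : w ≠ 0) : ‖nrm p w‖ = 1 := by
  obtain ⟨s, hs, hr⟩ := nrm_spec w hw
  rw [nrm, hr, norm_smul, norm_p_zpow, hs, ← zpow_add₀ (ne_of_gt p_real_pos)]
  simp

lemma nrm_smul_zpow (w : Fin n → ℚ_[p]) (hw : w ≠ 0) (t : ℤ) :
    nrm p (((p:ℚ_[p])^t) • w) = nrm p w := by
  obtain ⟨s, hs, hr⟩ := nrm_spec w hw
  have h1 : ‖((p:ℚ_[p])^t) • w‖ = (p:ℝ)^(s - t) := by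
    rw [norm_smul, norm_p_zpow, hs, ← zpow_add₀ (ne_of_gt p_real_pos)]
    ring_nf
  have hpne : ((p:ℚ_[p])) ≠ 0 := by exact_mod_cast hp.out.ne_zero
  rw [nrm, nrm, h1, hr, realToPadic_eq _ _ rfl, smul_smul, ← zpow_add₀ hpne, sub_add_cancel]

lemma nrm_of_norm_one (w : Fin n → ℚ_[p]) (hw : ‖w‖ = 1) : nrm p w = w := by
  have : realToPadic p ‖w‖ = (p:ℚ_[p])^(0:ℤ) := realToPadic_eq _ 0 (by rw [hw]; simp)
  rw [nrm, this]
  simp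

/-! ### Ultrametric lemmas for `ℚ_p^n` -/

lemma norm_add_le_max (x z : Fin n → ℚ_[p]) : ‖x + z‖ ≤ max ‖x‖ ‖z‖ := by
  apply pi_norm_le_iff_of_nonneg (le_max_of_le_left (norm_nonneg x)) |>.2
  intro i
  refine le_trans (IsUltrametricDist.norm_add_le_max (x i) (z i)) ?_
  exact max_le_max (norm_le_pi_norm x i) (norm_le_pi_norm z i)

lemma norm_add_eq_left (x z : Fin n → ℚ_[p]) (h : ‖z‖ < ‖x‖) : ‖x + z‖ = ‖x‖ := by
  refine le_antisymm (le_trans (norm_add_le_max x z) (by rw [max_eq_left h.le])) ?_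
  by_contra hlt
  push_neg at hlt
  have : ‖x‖ ≤ max ‖x + z‖ ‖z‖ := by
    have := norm_add_le_max (x + z) (-z)
    simpa using this
  rcases max_cases ‖x + z‖ ‖z‖ with ⟨h1, _⟩ | ⟨h1, _⟩ <;> rw [h1] at this <;> linarith

lemma qp_norm_sum_le {ι : Type*} (s : Finset ι) (f : ι → ℚ_[p]) (C : ℝ) (hC : 0 ≤ C)
    (h : ∀ i ∈ s, ‖f i‖ ≤ C) : ‖∑ i ∈ s, f i‖ ≤ C := by
  classical
  induction s using Finset.induction_on with
  | empty => simpa using hC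
  | insert a t hnotmem ih =>
    rw [Finset.sum_insert hnotmem]
    refine le_trans (IsUltrametricDist.norm_add_le_max _ _) (max_le ?_ ?_)
    · exact h a (Finset.mem_insert_self a t)
    · exact ih fun i hi => h i (Finset.mem_insert_of_mem hi)

/-! ### Matrix sup-norms -/

/-- The max norm of a matrix, as the sup norm of the "flattened" function. -/
noncomputable def matNorm (B : Matrix (Fin n) (Fin n) ℚ_[p]) : ℝ :=
  ‖(fun ij : Fin n × Fin n => B ij.1 ij.2)‖

lemma matNorm_nonneg (B : Matrix (Fin n) (Fin n) ℚ_[p]) : 0 ≤ matNorm B := norm_nonneg _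

lemma entry_le_matNorm (B : Matrix (Fin n) (Fin n) ℚ_[p]) (i j : Fin n) :
    ‖B i j‖ ≤ matNorm B :=
  norm_le_pi_norm (fun ij : Fin n × Fin n => B ij.1 ij.2) (i, j)

lemma norm_mulVec_le (B : Matrix (Fin n) (Fin n) ℚ_[p]) (z : Fin n → ℚ_[p]) :
    ‖B.mulVec z‖ ≤ matNorm B * ‖z‖ := by
  apply pi_norm_le_iff_of_nonneg (mul_nonneg (matNorm_nonneg B) (norm_nonneg z)) |>.2
  intro i
  show ‖B.mulVec z i‖ ≤ _
  rw [Matrix.mulVec, dotProduct]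
  refine qp_norm_sum_le _ _ _ (mul_nonneg (matNorm_nonneg B) (norm_nonneg z)) ?_
  intro j _
  rw [norm_mul]
  exact mul_le_mul (entry_le_matNorm B i j) (norm_le_pi_norm z j) (norm_nonneg _)
    (matNorm_nonneg B)

lemma matNorm_mul_le (B C : Matrix (Fin n) (Fin n) ℚ_[p]) :
    matNorm (B * C) ≤ matNorm B * matNorm C := by
  apply pi_norm_le_iff_of_nonneg (mul_nonneg (matNorm_nonneg B) (matNorm_nonneg C)) |>.2
  rintro ⟨i, j⟩
  show ‖(B * C) i j‖ ≤ _
  rw [Matrix.mul_apply]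
  refine qp_norm_sum_le _ _ _ (mul_nonneg (matNorm_nonneg B) (matNorm_nonneg C)) ?_
  intro k _
  rw [norm_mul]
  exact mul_le_mul (entry_le_matNorm B i k) (entry_le_matNorm C k j) (norm_nonneg _)
    (matNorm_nonneg B)

lemma matNorm_exists (hn : 1 ≤ n) (B : Matrix (Fin n) (Fin n) ℚ_[p]) :
    ∃ i j, matNorm B = ‖B i j‖ := by
  have hne : (Finset.univ : Finset (Fin n × Fin n)).Nonempty := by
    haveI : Nonempty (Fin n) := ⟨⟨0, hn⟩⟩
    exact Finset.univ_nonempty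
  obtain ⟨ij, _, hij⟩ := Finset.exists_mem_eq_sup Finset.univ hne
    fun ij : Fin n × Fin n => ‖B ij.1 ij.2‖₊
  refine ⟨ij.1, ij.2, ?_⟩
  rw [matNorm, Pi.norm_def, hij]
  rfl

lemma matNorm_smul (c : ℚ_[p]) (B : Matrix (Fin n) (Fin n) ℚ_[p]) :
    matNorm (c • B) = ‖c‖ * matNorm B := by
  have : (fun ij : Fin n × Fin n => (c • B) ij.1 ij.2)
      = c • (fun ij : Fin n × Fin n => B ij.1 ij.2) := rfl
  rw [matNorm, this, norm_smul, matNorm]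

lemma matNorm_one (hn : 1 ≤ n) : matNorm (1 : Matrix (Fin n) (Fin n) ℚ_[p]) = 1 := by
  refine le_antisymm ?_ ?_
  · apply pi_norm_le_iff_of_nonneg zero_le_one |>.2
    rintro ⟨i, j⟩
    show ‖(1 : Matrix (Fin n) (Fin n) ℚ_[p]) i j‖ ≤ 1
    rw [Matrix.one_apply]
    split <;> simp
  · have := entry_le_matNorm (1 : Matrix (Fin n) (Fin n) ℚ_[p]) ⟨0, hn⟩ ⟨0, hn⟩
    rwa [Matrix.one_apply_eq, norm_one] at this

/-! ### Powers of `T` -/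

variable (T : GL (Fin n) ℚ_[p])

/-- the matrix of `T^k` -/
noncomputable def Amat (k : ℤ) : Matrix (Fin n) (Fin n) ℚ_[p] :=
  ((T^k : GL (Fin n) ℚ_[p]) : Matrix (Fin n) (Fin n) ℚ_[p])

lemma Amat_zero : Amat T 0 = 1 := by simp [Amat]

lemma Amat_mul (j k : ℤ) : Amat T j * Amat T k = Amat T (j + k) := by
  rw [Amat, Amat, Amat, zpow_add]
  rfl

lemma Amat_mulVec (j k : ℤ) (z : Fin n → ℚ_[p]) :
    (Amat T j).mulVec ((Amat T k).mulVec z) = (Amat T (j + k)).mulVec z := by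
  rw [Matrix.mulVec_mulVec, Amat_mul]

/-- the max-norm of the matrix of `T^k` -/
noncomputable def Mn (k : ℤ) : ℝ := matNorm (Amat T k)

lemma Mn_zero (hn : 1 ≤ n) : Mn T 0 = 1 := by rw [Mn, Amat_zero, matNorm_one hn]

lemma norm_Amat_mulVec_le (k : ℤ) (z : Fin n → ℚ_[p]) :
    ‖(Amat T k).mulVec z‖ ≤ Mn T k * ‖z‖ := norm_mulVec_le _ _

lemma one_le_Mn_mul (hn : 1 ≤ n) (k : ℤ) : 1 ≤ Mn T k * Mn T (-k) := by
  have h := matNorm_mul_le (Amat T k) (Amat T (-k))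
  rw [Amat_mul, add_neg_cancel] at h
  have h0 : matNorm (Amat T 0) = 1 := by rw [Amat_zero, matNorm_one hn]
  rw [h0] at h
  exact h

lemma Mn_pos (hn : 1 ≤ n) (k : ℤ) : 0 < Mn T k := by
  rcases lt_or_ge 0 (Mn T k) with h | h
  · exact h
  · exfalso
    have h1 := one_le_Mn_mul T hn k
    have h2 : Mn T k * Mn T (-k) ≤ 0 :=
      mul_nonpos_of_nonpos_of_nonneg h (matNorm_nonneg (Amat T (-k)))
    linarith

lemma Mn_submul (j k : ℤ) : Mn T (j + k) ≤ Mn T j * Mn T k := by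
  rw [Mn, ← Amat_mul]
  exact matNorm_mul_le _ _

lemma norm_Amat_mulVec_ge (hn : 1 ≤ n) (k : ℤ) (z : Fin n → ℚ_[p]) :
    (Mn T (-k))⁻¹ * ‖z‖ ≤ ‖(Amat T k).mulVec z‖ := by
  have h : ‖z‖ ≤ Mn T (-k) * ‖(Amat T k).mulVec z‖ := by
    have := norm_Amat_mulVec_le T (-k) ((Amat T k).mulVec z)
    rwa [Amat_mulVec, neg_add_cancel, Amat_zero, Matrix.one_mulVec] at this
  rw [inv_mul_le_iff₀ (Mn_pos T hn (-k))] at *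
  linarith

lemma Amat_mulVec_ne_zero (hn : 1 ≤ n) (k : ℤ) (z : Fin n → ℚ_[p]) (hz : z ≠ 0) :
    (Amat T k).mulVec z ≠ 0 := by
  intro h
  apply hz
  have := norm_Amat_mulVec_ge T hn k z
  rw [h, norm_zero] at this
  have hz' : ‖z‖ ≤ 0 := by
    have hpos := inv_pos.mpr (Mn_pos T hn (-k))
    nlinarith [norm_nonneg z]
  exact norm_le_zero_iff.mp hz'

/-! ### generalization of `exists_norm_zpow` used for flattened matrices -/

lemma exists_norm_zpow' {ι : Type*} [Fintype ι] (x : ι → ℚ_[p]) (hx : x ≠ 0) :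
    ∃ s : ℤ, ‖x‖ = (p:ℝ)^s := by
  have hnorm : ‖x‖ = ((Finset.univ.sup fun i => ‖x i‖₊ : NNReal) : ℝ) := Pi.norm_def x
  have hne : (Finset.univ : Finset ι).Nonempty := by
    by_contra h
    apply hx
    funext i
    exact absurd (Finset.mem_univ i) (fun hh => h ⟨i, hh⟩)
  obtain ⟨i, _, hi⟩ := Finset.exists_mem_eq_sup Finset.univ hne fun i => ‖x i‖₊
  have hxi : ‖x‖ = ‖x i‖ := by rw [hnorm, hi]; rfl
  have hxi0 : x i ≠ 0 := by
    intro h0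
    apply hx
    have h1 : ‖x‖ = 0 := by rw [hxi, h0, norm_zero]
    exact norm_eq_zero.mp h1
  refine ⟨-(x i).valuation, ?_⟩
  rw [hxi, Padic.norm_eq_zpow_neg_valuation hxi0]

lemma Mn_spec (hn : 1 ≤ n) (k : ℤ) :
    ∃ s : ℤ, Mn T k = (p:ℝ)^s ∧ realToPadic p (Mn T k) = (p:ℚ_[p])^s := by
  have hne : (fun ij : Fin n × Fin n => Amat T k ij.1 ij.2) ≠ 0 := by
    intro h
    have : Mn T k = 0 := by
      rw [Mn, matNorm, h, norm_zero]
    exact absurd this (ne_of_gt (Mn_pos T hn k))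
  obtain ⟨s, hs⟩ := exists_norm_zpow' _ hne
  exact ⟨s, hs, realToPadic_eq _ s hs⟩

/-! ### The key boundedness lemma -/

lemma exists_bound (hn : 1 ≤ n)
    (hT : ActsDistallyOn {f : (Fin n → ℚ_[p]) → Fin n → ℚ_[p] |
        ∃ k : ℤ, f = sphereMap p ((T ^ k : GL (Fin n) ℚ_[p]) : Matrix (Fin n) (Fin n) ℚ_[p])}
      (Metric.sphere (0 : Fin n → ℚ_[p]) 1)) :
    ∃ C : ℝ, 1 ≤ C ∧ ∀ k : ℤ, Mn T k * Mn T (-k) ≤ C := by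
  by_contra hcon
  push_neg at hcon
  have hc : ∀ l : ℕ, ∃ k : ℤ, max 1 (l:ℝ) < Mn T k * Mn T (-k) := by
    intro l
    obtain ⟨k, hk⟩ := hcon (max 1 (l:ℝ)) (le_max_left _ _)
    exact ⟨k, hk⟩
  choose kk hkk using hc
  -- scalars
  set c : ℕ → ℚ_[p] := fun l => realToPadic p (Mn T (kk l)) with hcdef
  set d : ℕ → ℚ_[p] := fun l => realToPadic p (Mn T (-(kk l))) with hddef
  have hcspec : ∀ l, ‖c l‖ = (Mn T (kk l))⁻¹ ∧ ∃ s : ℤ, c l = (p:ℚ_[p])^s := by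
    intro l
    obtain ⟨s, hs1, hs2⟩ := Mn_spec T hn (kk l)
    constructor
    · rw [hcdef]
      simp only
      rw [hs2, norm_p_zpow, hs1, zpow_neg]
    · exact ⟨s, hs2⟩
  have hdspec : ∀ l, ‖d l‖ = (Mn T (-(kk l)))⁻¹ ∧ ∃ s : ℤ, d l = (p:ℚ_[p])^s := by
    intro l
    obtain ⟨s, hs1, hs2⟩ := Mn_spec T hn (-(kk l))
    constructor
    · rw [hddef]
      simp only
      rw [hs2, norm_p_zpow, hs1, zpow_neg]
    · exact ⟨s, hs2⟩
  -- normalized matrices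
  set P : ℕ → Matrix (Fin n) (Fin n) ℚ_[p] := fun l => c l • Amat T (kk l) with hPdef
  set Q : ℕ → Matrix (Fin n) (Fin n) ℚ_[p] := fun l => d l • Amat T (-(kk l)) with hQdef
  have hPnorm : ∀ l, matNorm (P l) = 1 := by
    intro l
    rw [hPdef]
    simp only
    rw [matNorm_smul, (hcspec l).1, ← Mn,
      inv_mul_cancel₀ (ne_of_gt (Mn_pos T hn (kk l)))]
  have hQnorm : ∀ l, matNorm (Q l) = 1 := by
    intro l
    rw [hQdef]
    simp only
    rw [matNorm_smul, (hdspec l).1, ← Mn,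
      inv_mul_cancel₀ (ne_of_gt (Mn_pos T hn (-(kk l))))]
  have hPQ : ∀ l, P l * Q l = (c l * d l) • (1 : Matrix (Fin n) (Fin n) ℚ_[p]) := by
    intro l
    rw [hPdef, hQdef]
    simp only
    rw [smul_mul_assoc, mul_smul_comm, Amat_mul, add_neg_cancel, Amat_zero, smul_smul]
  have hcd : ∀ l, ‖c l * d l‖ ≤ (max 1 (l:ℝ))⁻¹ := by
    intro l
    rw [norm_mul, (hcspec l).1, (hdspec l).1, ← mul_inv]
    apply inv_anti₀
    · exact lt_of_lt_of_le one_pos (le_max_left _ _)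
    · exact (hkk l).le
  -- compact extraction
  set Pf : ℕ → (Fin n × Fin n → ℚ_[p]) := fun l ij => P l ij.1 ij.2 with hPfdef
  set Qf : ℕ → (Fin n × Fin n → ℚ_[p]) := fun l ij => Q l ij.1 ij.2 with hQfdef
  have hPfb : ∀ l, Pf l ∈ Metric.closedBall (0 : Fin n × Fin n → ℚ_[p]) 1 := by
    intro l
    rw [Metric.mem_closedBall, dist_zero_right]
    exact le_of_eq (hPnorm l)
  have hQfb : ∀ l, Qf l ∈ Metric.closedBall (0 : Fin n × Fin n → ℚ_[p]) 1 := by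
    intro l
    rw [Metric.mem_closedBall, dist_zero_right]
    exact le_of_eq (hQnorm l)
  obtain ⟨Pinf, _, φ₁, hφ₁, hPtend₁⟩ :=
    (isCompact_closedBall (0 : Fin n × Fin n → ℚ_[p]) 1).tendsto_subseq hPfb
  obtain ⟨Qinf, _, φ₂, hφ₂, hQtend⟩ :=
    (isCompact_closedBall (0 : Fin n × Fin n → ℚ_[p]) 1).tendsto_subseq
      (fun l => hQfb (φ₁ l))
  set φ : ℕ → ℕ := φ₁ ∘ φ₂ with hφdef
  have hφ : StrictMono φ := hφ₁.comp hφ₂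
  have hPtend : Filter.Tendsto (fun l => Pf (φ l)) Filter.atTop (nhds Pinf) :=
    hPtend₁.comp hφ₂.tendsto_atTop
  have hQtend' : Filter.Tendsto (fun l => Qf (φ l)) Filter.atTop (nhds Qinf) := hQtend
  set Pm : Matrix (Fin n) (Fin n) ℚ_[p] := Matrix.of (fun i j => Pinf (i, j)) with hPmdef
  set Qm : Matrix (Fin n) (Fin n) ℚ_[p] := Matrix.of (fun i j => Qinf (i, j)) with hQmdef
  have hPe : ∀ i j, Filter.Tendsto (fun l => P (φ l) i j) Filter.atTop (nhds (Pm i j)) :=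
    fun i j => tendsto_pi_nhds.1 hPtend (i, j)
  have hQe : ∀ i j, Filter.Tendsto (fun l => Q (φ l) i j) Filter.atTop (nhds (Qm i j)) :=
    fun i j => tendsto_pi_nhds.1 hQtend' (i, j)
  -- the product tends to zero
  have hcd0 : Filter.Tendsto (fun l => ‖c (φ l) * d (φ l)‖) Filter.atTop (nhds 0) := by
    apply squeeze_zero (fun l => norm_nonneg _) (fun l => le_trans (hcd (φ l)) ?_)
    · have h1 : Filter.Tendsto (fun l : ℕ => max 1 (l:ℝ)) Filter.atTop Filter.atTop :=
        Filter.tendsto_atTop_mono (fun l => le_max_right 1 (l:ℝ)) tendsto_natCast_atTop_atTop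
      exact h1.inv_tendsto_atTop
    · apply inv_anti₀ (lt_of_lt_of_le one_pos (le_max_left _ _))
      exact max_le_max le_rfl (Nat.cast_le.mpr hφ.le_apply)
  have hprod0 : Pm * Qm = 0 := by
    ext i j
    have h1 : Filter.Tendsto (fun l => ∑ t, P (φ l) i t * Q (φ l) t j) Filter.atTop
        (nhds (∑ t, Pm i t * Qm t j)) :=
      tendsto_finset_sum _ (fun t _ => (hPe i t).mul (hQe t j))
    have h2 : Filter.Tendsto (fun l => ∑ t, P (φ l) i t * Q (φ l) t j) Filter.atTop
        (nhds 0) := by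
      have heq : ∀ l, ∑ t, P (φ l) i t * Q (φ l) t j
          = (c (φ l) * d (φ l)) * (1 : Matrix (Fin n) (Fin n) ℚ_[p]) i j := by
        intro l
        have := congrArg (fun B => B i j) (hPQ (φ l))
        simpa [Matrix.mul_apply, Matrix.smul_apply, smul_eq_mul] using this
      rw [show (fun l => ∑ t, P (φ l) i t * Q (φ l) t j)
          = fun l => (c (φ l) * d (φ l)) * (1 : Matrix (Fin n) (Fin n) ℚ_[p]) i j
          from funext heq]
      rw [tendsto_zero_iff_norm_tendsto_zero]
      apply squeeze_zero (fun l => norm_nonneg _) (fun l => ?_) hcd0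
      rw [norm_mul]
      calc ‖c (φ l) * d (φ l)‖ * ‖(1 : Matrix (Fin n) (Fin n) ℚ_[p]) i j‖
          ≤ ‖c (φ l) * d (φ l)‖ * 1 := by
            apply mul_le_mul_of_nonneg_left _ (norm_nonneg _)
            rw [Matrix.one_apply]
            split <;> simp
        _ = ‖c (φ l) * d (φ l)‖ := mul_one _
    have h3 := tendsto_nhds_unique h1 h2
    show ∑ t, Pm i t * Qm t j = (0 : Matrix (Fin n) (Fin n) ℚ_[p]) i j
    rw [h3, Matrix.zero_apply]
  -- norms of limit matrices
  have hPmnorm : matNorm Pm = 1 := by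
    have h1 : Filter.Tendsto (fun l => ‖Pf (φ l)‖) Filter.atTop (nhds ‖Pinf‖) := hPtend.norm
    have h2 : ∀ l, ‖Pf (φ l)‖ = 1 := fun l => hPnorm (φ l)
    have h3 : ‖Pinf‖ = 1 := by
      have := tendsto_nhds_unique h1 (by rw [funext h2]; exact tendsto_const_nhds)
      linarith
    exact h3
  have hQmnorm : matNorm Qm = 1 := by
    have h1 : Filter.Tendsto (fun l => ‖Qf (φ l)‖) Filter.atTop (nhds ‖Qinf‖) := hQtend'.norm
    have h2 : ∀ l, ‖Qf (φ l)‖ = 1 := fun l => hQnorm (φ l)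
    have h3 : ‖Qinf‖ = 1 := by
      have := tendsto_nhds_unique h1 (by rw [funext h2]; exact tendsto_const_nhds)
      linarith
    exact h3
  have hPmentry : ∀ i j, ‖Pm i j‖ ≤ 1 := by
    intro i j
    have := entry_le_matNorm Pm i j
    rw [hPmnorm] at this
    exact this
  have hQmentry : ∀ i j, ‖Qm i j‖ ≤ 1 := by
    intro i j
    have := entry_le_matNorm Qm i j
    rw [hQmnorm] at this
    exact this
  obtain ⟨i₁, j₁, hij1⟩ := matNorm_exists hn Pm
  obtain ⟨i₀, j₀, hij0⟩ := matNorm_exists hn Qm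
  rw [hPmnorm] at hij1
  rw [hQmnorm] at hij0
  -- the proximal pair
  set x : Fin n → ℚ_[p] := Pi.single j₁ (1:ℚ_[p]) with hxdef
  have hxnorm : ‖x‖ = 1 := by rw [hxdef, Pi.norm_single, norm_one]
  set v : Fin n → ℚ_[p] := fun i => Qm i j₀ with hvdef
  have hvnorm : ‖v‖ = 1 := by
    refine le_antisymm ?_ ?_
    · exact pi_norm_le_iff_of_nonneg zero_le_one |>.2 fun i => hQmentry i j₀
    · calc (1:ℝ) = ‖Qm i₀ j₀‖ := hij0
        _ = ‖v i₀‖ := rfl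
        _ ≤ ‖v‖ := norm_le_pi_norm v i₀
  have hv0 : v ≠ 0 := by
    intro h
    rw [h, norm_zero] at hvnorm
    linarith
  have hPmv : Pm.mulVec v = 0 := by
    have h1 : v = Qm.mulVec (Pi.single j₀ 1) := by
      funext i
      simp [Matrix.mulVec_single, hvdef]
    rw [h1, Matrix.mulVec_mulVec, hprod0, Matrix.zero_mulVec]
  set y : Fin n → ℚ_[p] := x + (p:ℚ_[p]) • v with hydef
  have hpQ : ‖(p:ℚ_[p]) • v‖ = (p:ℝ)⁻¹ := by
    rw [norm_smul, Padic.norm_p, hvnorm, mul_one]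
  have hpinvlt : ((p:ℝ))⁻¹ < 1 := by
    rw [inv_lt_one_iff₀]
    right
    exact p_real_gt_one
  have hynorm : ‖y‖ = 1 := by
    rw [hydef, norm_add_eq_left x _ (by rw [hpQ, hxnorm]; exact hpinvlt), hxnorm]
  have hxy : x ≠ y := by
    intro h
    have h2 : (p:ℚ_[p]) • v = 0 := by
      have := congrArg (fun z => z - x) h
      simpa [hydef] using this.symm
    exact smul_ne_zero (by exact_mod_cast hp.out.ne_zero) hv0 h2
  -- limiting direction
  set Pcol : ℕ → (Fin n → ℚ_[p]) := fun l i => P (φ l) i j₁ with hPcoldef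
  set d0 : Fin n → ℚ_[p] := fun i => Pm i j₁ with hd0def
  have hd0norm : ‖d0‖ = 1 := by
    refine le_antisymm ?_ ?_
    · exact pi_norm_le_iff_of_nonneg zero_le_one |>.2 fun i => hPmentry i j₁
    · calc (1:ℝ) = ‖Pm i₁ j₁‖ := hij1
        _ = ‖d0 i₁‖ := rfl
        _ ≤ ‖d0‖ := norm_le_pi_norm d0 i₁
  have hd0sphere : d0 ∈ Metric.sphere (0 : Fin n → ℚ_[p]) 1 :=
    mem_sphere_zero_iff_norm.mpr hd0norm
  have hPcoltend : Filter.Tendsto Pcol Filter.atTop (nhds d0) :=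
    tendsto_pi_nhds.2 (fun i => hPe i j₁)
  have hPcolnorm : ∀ᶠ l in Filter.atTop, ‖Pcol l‖ = 1 := by
    have h1 : ∀ᶠ l in Filter.atTop, dist (Pcol l) d0 < 1 :=
      Metric.tendsto_nhds.mp hPcoltend 1 one_pos
    filter_upwards [h1] with l hl
    rw [dist_eq_norm] at hl
    have h2 : Pcol l = d0 + (Pcol l - d0) := by abel
    rw [h2, norm_add_eq_left d0 _ (by rw [hd0norm]; exact hl), hd0norm]
  -- eventual identification of the sphere maps
  have hx0 : x ≠ 0 := fun h => by rw [h, norm_zero] at hxnorm; linarith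
  have hy0 : y ≠ 0 := fun h => by rw [h, norm_zero] at hynorm; linarith
  have hmulx : ∀ l, (P (φ l)).mulVec x = Pcol l := by
    intro l
    funext i
    rw [hxdef]
    simp [Matrix.mulVec_single, hPcoldef]
  have hfx : ∀ᶠ l in Filter.atTop,
      sphereMap p (Amat T (kk (φ l))) x = Pcol l := by
    filter_upwards [hPcolnorm] with l hl
    obtain ⟨s, hcs⟩ := (hcspec (φ l)).2
    have hAx : (Amat T (kk (φ l))).mulVec x ≠ 0 := Amat_mulVec_ne_zero T hn _ x hx0
    have h1 : sphereMap p (Amat T (kk (φ l))) x = nrm p ((Amat T (kk (φ l))).mulVec x) := rfl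
    have h2 : c (φ l) • ((Amat T (kk (φ l))).mulVec x) = Pcol l := by
      rw [← hmulx l, hPdef]
      simp only
      rw [Matrix.smul_mulVec]
    rw [h1, ← nrm_smul_zpow _ hAx s, ← hcs, h2, nrm_of_norm_one _ hl]
  have hPvtend : Filter.Tendsto (fun l => (P (φ l)).mulVec v) Filter.atTop
      (nhds (0 : Fin n → ℚ_[p])) := by
    rw [← hPmv]
    apply tendsto_pi_nhds.2
    intro i
    have h1 : ∀ l, (P (φ l)).mulVec v i = ∑ t, P (φ l) i t * v t := by
      intro l; rw [Matrix.mulVec, dotProduct]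
    have h2 : Pm.mulVec v i = ∑ t, Pm i t * v t := by
      rw [Matrix.mulVec, dotProduct]
    rw [funext h1, h2]
    exact tendsto_finset_sum _ (fun t _ => (hPe i t).mul tendsto_const_nhds)
  have hmuly : ∀ l, (P (φ l)).mulVec y = Pcol l + (p:ℚ_[p]) • (P (φ l)).mulVec v := by
    intro l
    rw [hydef, Matrix.mulVec_add, hmulx l]
    congr 1
    rw [Matrix.mulVec_smul]
  have hPvbound : ∀ l, ‖(p:ℚ_[p]) • (P (φ l)).mulVec v‖ ≤ (p:ℝ)⁻¹ := by
    intro l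
    rw [norm_smul, Padic.norm_p]
    have h1 : ‖(P (φ l)).mulVec v‖ ≤ 1 := by
      have := norm_mulVec_le (P (φ l)) v
      rw [hPnorm (φ l), hvnorm, one_mul] at this
      exact this
    calc (p:ℝ)⁻¹ * ‖(P (φ l)).mulVec v‖ ≤ (p:ℝ)⁻¹ * 1 :=
          mul_le_mul_of_nonneg_left h1 (by positivity)
      _ = (p:ℝ)⁻¹ := mul_one _
  have hfy : ∀ᶠ l in Filter.atTop,
      sphereMap p (Amat T (kk (φ l))) y = Pcol l + (p:ℚ_[p]) • (P (φ l)).mulVec v := by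
    filter_upwards [hPcolnorm] with l hl
    obtain ⟨s, hcs⟩ := (hcspec (φ l)).2
    have hAy : (Amat T (kk (φ l))).mulVec y ≠ 0 := Amat_mulVec_ne_zero T hn _ y hy0
    have h1 : sphereMap p (Amat T (kk (φ l))) y = nrm p ((Amat T (kk (φ l))).mulVec y) := rfl
    have h2 : c (φ l) • ((Amat T (kk (φ l))).mulVec y) = (P (φ l)).mulVec y := by
      rw [hPdef]
      simp only
      rw [Matrix.smul_mulVec]
    have h3 : ‖(P (φ l)).mulVec y‖ = 1 := by
      rw [hmuly l, norm_add_eq_left _ _ ?_, hl]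
      rw [hl]
      exact lt_of_le_of_lt (hPvbound l) hpinvlt
    rw [h1, ← nrm_smul_zpow _ hAy s, ← hcs, h2, nrm_of_norm_one _ h3, hmuly l]
  -- limits
  have hfxlim : Filter.Tendsto (fun l => sphereMap p (Amat T (kk (φ l))) x)
      Filter.atTop (nhds d0) := by
    apply Filter.Tendsto.congr' ?_ hPcoltend
    filter_upwards [hfx] with l hl
    exact hl.symm
  have hfylim : Filter.Tendsto (fun l => sphereMap p (Amat T (kk (φ l))) y)
      Filter.atTop (nhds d0) := by
    have h1 : Filter.Tendsto (fun l => Pcol l + (p:ℚ_[p]) • (P (φ l)).mulVec v)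
        Filter.atTop (nhds (d0 + (p:ℚ_[p]) • (0 : Fin n → ℚ_[p]))) :=
      hPcoltend.add (hPvtend.const_smul (p:ℚ_[p]))
    rw [smul_zero, add_zero] at h1
    apply Filter.Tendsto.congr' ?_ h1
    filter_upwards [hfy] with l hl
    exact hl.symm
  -- contradiction with distality
  refine hT x (mem_sphere_zero_iff_norm.mpr hxnorm) y (mem_sphere_zero_iff_norm.mpr hynorm)
    hxy d0 hd0sphere ?_
  apply mem_closure_of_tendsto (hfxlim.prodMk_nhds hfylim)
  apply Filter.Eventually.of_forall
  intro l
  exact ⟨sphereMap p (Amat T (kk (φ l))), ⟨kk (φ l), rfl⟩, rfl⟩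

/-! ### Norm bounds for sums of vectors -/

lemma pi_norm_sum_le {ι : Type*} (s : Finset ι) (f : ι → (Fin n → ℚ_[p])) (B : ℝ) (hB : 0 ≤ B)
    (h : ∀ i ∈ s, ‖f i‖ ≤ B) : ‖∑ i ∈ s, f i‖ ≤ B := by
  classical
  induction s using Finset.induction_on with
  | empty => simpa using hB
  | insert a t hnotmem ih =>
    rw [Finset.sum_insert hnotmem]
    refine le_trans (norm_add_le_max _ _) (max_le ?_ ?_)
    · exact h a (Finset.mem_insert_self a t)
    · exact ih fun i hi => h i (Finset.mem_insert_of_mem hi)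

section Bounds

variable (hn : 1 ≤ n) (C : ℝ) (hC1 : 1 ≤ C) (hC : ∀ k : ℤ, Mn T k * Mn T (-k) ≤ C)

include hn hC1 hC

lemma low_bound (m : ℤ) : C⁻¹ * Mn T m ≤ (Mn T (-m))⁻¹ := by
  have h1 := hC m
  have h2 := Mn_pos T hn m
  have h3 := Mn_pos T hn (-m)
  have hC0 : (0:ℝ) < C := lt_of_lt_of_le one_pos hC1
  have h4 : C⁻¹ * Mn T m * Mn T (-m) ≤ 1 := by
    rw [mul_assoc]
    calc C⁻¹ * (Mn T m * Mn T (-m)) ≤ C⁻¹ * C :=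
          mul_le_mul_of_nonneg_left (hC m) (by positivity)
      _ = 1 := inv_mul_cancel₀ (ne_of_gt hC0)
  calc C⁻¹ * Mn T m = (C⁻¹ * Mn T m * Mn T (-m)) * (Mn T (-m))⁻¹ := by
        field_simp
    _ ≤ 1 * (Mn T (-m))⁻¹ := mul_le_mul_of_nonneg_right h4 (by positivity)
    _ = (Mn T (-m))⁻¹ := one_mul _

lemma norm_mulVec_unit_ge (m : ℤ) (x : Fin n → ℚ_[p]) (hx : ‖x‖ = 1) :
    C⁻¹ * Mn T m ≤ ‖(Amat T m).mulVec x‖ := by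
  refine le_trans (low_bound T hn C hC1 hC m) ?_
  have := norm_Amat_mulVec_ge T hn m x
  rwa [hx, mul_one] at this

omit hn hC1 hC in
lemma norm_mulVec_unit_le (m : ℤ) (x : Fin n → ℚ_[p]) (hx : ‖x‖ = 1) :
    ‖(Amat T m).mulVec x‖ ≤ Mn T m := by
  have := norm_Amat_mulVec_le T m x
  rwa [hx, mul_one] at this

omit hC1 in
lemma Mn_supermul (i j : ℤ) : Mn T i * Mn T j ≤ C * Mn T (i + j) := by
  have h1 : Mn T i ≤ Mn T (i + j) * Mn T (-j) := by
    have := Mn_submul T (i + j) (-j)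
    rwa [add_neg_cancel_right] at this
  have h2 : Mn T j * Mn T (-j) ≤ C := by
    have := hC j
    linarith [hC j]
  have h3 := Mn_pos T hn j
  have h4 := Mn_pos T hn (-j)
  have h5 := Mn_pos T hn (i + j)
  nlinarith [Mn_pos T hn i]

/-- The key two-sided estimate for normalized affine images of a close pair. -/
lemma pair_bounds (m : ℤ) (x y w : Fin n → ℚ_[p]) (hx : ‖x‖ = 1) (hy : ‖y‖ = 1)
    (hw : ‖w‖ < C⁻¹ * Mn T m) (hclose : ‖x - y‖ < C⁻¹) :
    ‖nrm p ((Amat T m).mulVec x + w) - nrm p ((Amat T m).mulVec y + w)‖ ≤ C * ‖x - y‖ ∧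
    C⁻¹ * ‖x - y‖ ≤ ‖nrm p ((Amat T m).mulVec x + w) - nrm p ((Amat T m).mulVec y + w)‖ := by
  have hC0 : (0:ℝ) < C := lt_of_lt_of_le one_pos hC1
  have hMm := Mn_pos T hn m
  set z : Fin n → ℚ_[p] := (Amat T m).mulVec x + w with hzdef
  set z' : Fin n → ℚ_[p] := (Amat T m).mulVec y + w with hz'def
  have hlowx := norm_mulVec_unit_ge T hn C hC1 hC m x hx
  have hzx : ‖z‖ = ‖(Amat T m).mulVec x‖ :=
    norm_add_eq_left _ _ (lt_of_lt_of_le hw hlowx)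
  have hzpos : 0 < ‖z‖ := by
    rw [hzx]; exact lt_of_lt_of_le (by positivity) hlowx
  have hzne : z ≠ 0 := fun h => by rw [h, norm_zero] at hzpos; linarith
  have hdiffz : z' = z + (Amat T m).mulVec (y - x) := by
    rw [hzdef, hz'def, Matrix.mulVec_sub]
    abel
  have hAxy : ‖(Amat T m).mulVec (y - x)‖ < ‖z‖ := by
    calc ‖(Amat T m).mulVec (y - x)‖ ≤ Mn T m * ‖y - x‖ := norm_Amat_mulVec_le T m _
      _ = Mn T m * ‖x - y‖ := by rw [norm_sub_rev]
      _ < Mn T m * C⁻¹ := by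
          apply mul_lt_mul_of_pos_left hclose hMm
      _ = C⁻¹ * Mn T m := mul_comm _ _
      _ ≤ ‖z‖ := by rw [hzx]; exact hlowx
  have hzz' : ‖z'‖ = ‖z‖ := by rw [hdiffz, norm_add_eq_left _ _ hAxy]
  obtain ⟨s, hs1, hs2⟩ := nrm_spec z hzne
  have hnz : nrm p z = ((p:ℚ_[p])^s) • z := by rw [nrm, hs2]
  have hnz' : nrm p z' = ((p:ℚ_[p])^s) • z' := by rw [nrm, hzz', hs2]
  have hdiff : nrm p z - nrm p z' = ((p:ℚ_[p])^s) • ((Amat T m).mulVec (x - y)) := by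
    rw [hnz, hnz', ← smul_sub]
    congr 1
    rw [hzdef, hz'def, Matrix.mulVec_sub]
    abel
  have hns : ‖((p:ℚ_[p])^s)‖ = ‖z‖⁻¹ := by
    rw [norm_p_zpow, hs1, zpow_neg]
  have hdn : ‖nrm p z - nrm p z'‖ = ‖z‖⁻¹ * ‖(Amat T m).mulVec (x - y)‖ := by
    rw [hdiff, norm_smul, hns]
  constructor
  · rw [hdn]
    have h1 : ‖(Amat T m).mulVec (x - y)‖ ≤ Mn T m * ‖x - y‖ := norm_Amat_mulVec_le T m _
    have h2 : ‖z‖⁻¹ ≤ C * (Mn T m)⁻¹ := by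
      rw [inv_le_iff_one_le_mul₀ hzpos]
      calc (1:ℝ) = (C * (Mn T m)⁻¹) * (C⁻¹ * Mn T m) := by
            field_simp
        _ ≤ (C * (Mn T m)⁻¹) * ‖z‖ := by
            apply mul_le_mul_of_nonneg_left (by rw [hzx]; exact hlowx) (by positivity)
    calc ‖z‖⁻¹ * ‖(Amat T m).mulVec (x - y)‖
        ≤ (C * (Mn T m)⁻¹) * (Mn T m * ‖x - y‖) := by
          apply mul_le_mul h2 h1 (norm_nonneg _) (by positivity)
      _ = C * ‖x - y‖ := by
          field_simp
  · rw [hdn]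
    have h1 : (Mn T (-m))⁻¹ * ‖x - y‖ ≤ ‖(Amat T m).mulVec (x - y)‖ :=
      norm_Amat_mulVec_ge T hn m _
    have h1' : C⁻¹ * Mn T m * ‖x - y‖ ≤ ‖(Amat T m).mulVec (x - y)‖ :=
      le_trans (mul_le_mul_of_nonneg_right (low_bound T hn C hC1 hC m) (norm_nonneg _)) h1
    have h2 : (Mn T m)⁻¹ ≤ ‖z‖⁻¹ := by
      apply inv_anti₀ hzpos
      rw [hzx]
      exact norm_mulVec_unit_le T m x hx
    calc C⁻¹ * ‖x - y‖ = (Mn T m)⁻¹ * (C⁻¹ * Mn T m * ‖x - y‖) := by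
          field_simp
      _ ≤ ‖z‖⁻¹ * ‖(Amat T m).mulVec (x - y)‖ := by
          apply mul_le_mul h2 h1' (by positivity) (by positivity)

end Bounds

lemma mulVec_sum {ι : Type*} (B : Matrix (Fin n) (Fin n) ℚ_[p]) (s : Finset ι)
    (f : ι → (Fin n → ℚ_[p])) :
    B.mulVec (∑ j ∈ s, f j) = ∑ j ∈ s, B.mulVec (f j) := by
  classical
  induction s using Finset.induction_on with
  | empty => simp [Matrix.mulVec_zero]
  | insert a t hnotmem ih =>
    rw [Finset.sum_insert hnotmem, Finset.sum_insert hnotmem, Matrix.mulVec_add, ih]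

section Iter

variable (hn : 1 ≤ n) (C : ℝ) (hC1 : 1 ≤ C) (hC : ∀ k : ℤ, Mn T k * Mn T (-k) ≤ C)
variable (m1 : ℝ) (hm11 : 1 ≤ m1) (εm : ℝ) (hεm0 : 0 ≤ εm) (hεm : εm * (C * m1 * C) < 1)
variable (ρ : ℝ) (hρC : ρ * (C * C) < 1)
variable (σ : ℤ) (hMσ : Mn T σ ≤ m1) (hMσ' : Mn T (-σ) ≤ m1)
variable (H : (Metric.sphere (0 : Fin n → ℚ_[p]) 1) → (Metric.sphere (0 : Fin n → ℚ_[p]) 1))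
variable (e : (Fin n → ℚ_[p]) → (Fin n → ℚ_[p]))
variable (hH : ∀ z : (Metric.sphere (0 : Fin n → ℚ_[p]) 1),
  ((H z : Fin n → ℚ_[p])) = nrm p ((Amat T σ).mulVec (z : Fin n → ℚ_[p]) + e (z : Fin n → ℚ_[p])))
variable (heb : ∀ z : (Metric.sphere (0 : Fin n → ℚ_[p]) 1), ‖e (z : Fin n → ℚ_[p])‖ ≤ εm)
variable (hel : ∀ z w : (Metric.sphere (0 : Fin n → ℚ_[p]) 1),
  ‖(z : Fin n → ℚ_[p]) - (w : Fin n → ℚ_[p])‖ < C⁻¹ → e (z : Fin n → ℚ_[p]) = e (w : Fin n → ℚ_[p]))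

/-- the accumulated perturbation vector -/
noncomputable def Wsum (u : ℕ → (Fin n → ℚ_[p])) (k : ℕ) : Fin n → ℚ_[p] :=
  ∑ j ∈ Finset.range k, (Amat T (σ*((k:ℤ)-1-(j:ℤ)))).mulVec (u j)

include hn hC1 hC hm11 hεm0 hεm hMσ' in
lemma Wsum_bound (u : ℕ → (Fin n → ℚ_[p])) (hub : ∀ j, ‖u j‖ ≤ εm * Mn T (σ*j)) (k : ℕ) :
    ‖Wsum T σ u k‖ < C⁻¹ * Mn T (σ*k) := by
  have hC0 : (0:ℝ) < C := lt_of_lt_of_le one_pos hC1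
  have hm10 : (0:ℝ) < m1 := lt_of_lt_of_le one_pos hm11
  have hMk := Mn_pos T hn (σ*k)
  have hterm : ∀ j ∈ Finset.range k,
      ‖(Amat T (σ*((k:ℤ)-1-(j:ℤ)))).mulVec (u j)‖ ≤ εm * C * m1 * Mn T (σ*k) := by
    intro j _
    calc ‖(Amat T (σ*((k:ℤ)-1-(j:ℤ)))).mulVec (u j)‖
        ≤ Mn T (σ*((k:ℤ)-1-(j:ℤ))) * ‖u j‖ := norm_Amat_mulVec_le T _ _
      _ ≤ Mn T (σ*((k:ℤ)-1-(j:ℤ))) * (εm * Mn T (σ*j)) := by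
          apply mul_le_mul_of_nonneg_left (hub j) (le_of_lt (Mn_pos T hn _))
      _ = εm * (Mn T (σ*((k:ℤ)-1-(j:ℤ))) * Mn T (σ*j)) := by ring
      _ ≤ εm * (C * Mn T (σ*((k:ℤ)-1-(j:ℤ)) + σ*j)) := by
          apply mul_le_mul_of_nonneg_left (Mn_supermul T hn C hC _ _) hεm0
      _ = εm * (C * Mn T (σ*((k:ℤ)-1))) := by
          congr 2
          ring_nf
      _ ≤ εm * (C * (Mn T (σ*k) * Mn T (-σ))) := by
          apply mul_le_mul_of_nonneg_left _ hεm0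
          apply mul_le_mul_of_nonneg_left _ (le_of_lt hC0)
          have h1 : σ*((k:ℤ)-1) = σ*k + (-σ) := by ring
          rw [h1]
          exact Mn_submul T _ _
      _ ≤ εm * (C * (Mn T (σ*k) * m1)) := by
          apply mul_le_mul_of_nonneg_left _ hεm0
          apply mul_le_mul_of_nonneg_left _ (le_of_lt hC0)
          exact mul_le_mul_of_nonneg_left hMσ' (le_of_lt hMk)
      _ = εm * C * m1 * Mn T (σ*k) := by ring
  have hsum : ‖Wsum T σ u k‖ ≤ εm * C * m1 * Mn T (σ*k) :=
    pi_norm_sum_le _ _ _ (by positivity) hterm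
  refine lt_of_le_of_lt hsum ?_
  have hkey : εm * C * m1 < C⁻¹ := by
    have h1 : εm * C * m1 * C < 1 := by
      rw [show εm * C * m1 * C = εm * (C * m1 * C) from by ring]
      exact hεm
    calc εm * C * m1 = (εm * C * m1 * C) * C⁻¹ := by field_simp
      _ < 1 * C⁻¹ := by
          apply mul_lt_mul_of_pos_right h1 (by positivity)
      _ = C⁻¹ := one_mul _
  calc εm * C * m1 * Mn T (σ*k) < C⁻¹ * Mn T (σ*k) :=
    mul_lt_mul_of_pos_right hkey hMk

include hn hC1 hC hm11 hεm0 hεm hρC hMσ hMσ' hH heb hel in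
lemma iter_form (x y : (Metric.sphere (0 : Fin n → ℚ_[p]) 1))
    (hxy : ‖(x : Fin n → ℚ_[p]) - (y : Fin n → ℚ_[p])‖ < ρ) (k : ℕ) :
    ∃ u : ℕ → (Fin n → ℚ_[p]), (∀ j : ℕ, ‖u j‖ ≤ εm * Mn T (σ*j)) ∧
      ((H^[k] x : (Metric.sphere (0 : Fin n → ℚ_[p]) 1)) : Fin n → ℚ_[p])
        = nrm p ((Amat T (σ*k)).mulVec (x : Fin n → ℚ_[p]) + Wsum T σ u k) ∧
      ((H^[k] y : (Metric.sphere (0 : Fin n → ℚ_[p]) 1)) : Fin n → ℚ_[p])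
        = nrm p ((Amat T (σ*k)).mulVec (y : Fin n → ℚ_[p]) + Wsum T σ u k) := by
  have hC0 : (0:ℝ) < C := lt_of_lt_of_le one_pos hC1
  have hm10 : (0:ℝ) < m1 := lt_of_lt_of_le one_pos hm11
  have hρ0 : 0 < ρ := lt_of_le_of_lt (norm_nonneg _) hxy
  have hρinv : ρ < C⁻¹ := by
    have h1 : ρ * C < 1 := by
      refine lt_of_le_of_lt (le_trans ?_ (le_of_eq (show ρ * C * C = ρ * (C * C) from by ring)))
        (lt_of_le_of_lt le_rfl hρC)
      exact le_mul_of_one_le_right (by positivity) hC1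
    calc ρ = (ρ * C) * C⁻¹ := by field_simp
      _ < 1 * C⁻¹ := mul_lt_mul_of_pos_right h1 (by positivity)
      _ = C⁻¹ := one_mul _
  have hCρ : C * ρ < C⁻¹ := by
    have h1 : C * ρ * C < 1 := by
      rw [show C * ρ * C = ρ * (C * C) from by ring]
      exact hρC
    calc C * ρ = (C * ρ * C) * C⁻¹ := by field_simp
      _ < 1 * C⁻¹ := mul_lt_mul_of_pos_right h1 (by positivity)
      _ = C⁻¹ := one_mul _
  have hclose : ‖(x : Fin n → ℚ_[p]) - (y : Fin n → ℚ_[p])‖ < C⁻¹ := hxy.trans hρinv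
  have hxu : ‖(x : Fin n → ℚ_[p])‖ = 1 := mem_sphere_zero_iff_norm.1 x.2
  have hyu : ‖(y : Fin n → ℚ_[p])‖ = 1 := mem_sphere_zero_iff_norm.1 y.2
  have hpne : ((p:ℚ_[p])) ≠ 0 := by exact_mod_cast hp.out.ne_zero
  induction k with
  | zero =>
    refine ⟨fun _ => 0, fun j => ?_, ?_, ?_⟩
    · show ‖(0 : Fin n → ℚ_[p])‖ ≤ _
      rw [norm_zero]
      exact mul_nonneg hεm0 (le_of_lt (Mn_pos T hn _))
    · have h0 : Wsum T σ (fun _ => (0 : Fin n → ℚ_[p])) 0 = 0 := by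
        rw [Wsum, Finset.sum_range_zero]
      rw [h0]
      have h1 : σ * ((0:ℕ):ℤ) = 0 := by simp
      rw [h1, Amat_zero, Matrix.one_mulVec, add_zero]
      simp only [Function.iterate_zero_apply]
      rw [nrm_of_norm_one _ hxu]
    · have h0 : Wsum T σ (fun _ => (0 : Fin n → ℚ_[p])) 0 = 0 := by
        rw [Wsum, Finset.sum_range_zero]
      rw [h0]
      have h1 : σ * ((0:ℕ):ℤ) = 0 := by simp
      rw [h1, Amat_zero, Matrix.one_mulVec, add_zero]
      simp only [Function.iterate_zero_apply]
      rw [nrm_of_norm_one _ hyu]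
  | succ k IH =>
    obtain ⟨u, hub, hxk, hyk⟩ := IH
    set m : ℤ := σ * (k:ℤ) with hmdef
    set W : Fin n → ℚ_[p] := Wsum T σ u k with hWdef
    have hWb : ‖W‖ < C⁻¹ * Mn T m :=
      Wsum_bound T hn C hC1 hC m1 hm11 εm hεm0 hεm σ hMσ' u hub k
    set z : Fin n → ℚ_[p] := (Amat T m).mulVec (x : Fin n → ℚ_[p]) + W with hzdef
    set z' : Fin n → ℚ_[p] := (Amat T m).mulVec (y : Fin n → ℚ_[p]) + W with hz'def
    have hMm := Mn_pos T hn m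
    have hlowx := norm_mulVec_unit_ge T hn C hC1 hC m _ hxu
    have hzx : ‖z‖ = ‖(Amat T m).mulVec (x : Fin n → ℚ_[p])‖ :=
      norm_add_eq_left _ _ (lt_of_lt_of_le hWb hlowx)
    have hzpos : 0 < ‖z‖ := by
      rw [hzx]; exact lt_of_lt_of_le (by positivity) hlowx
    have hzne : z ≠ 0 := fun h => by rw [h, norm_zero] at hzpos; linarith
    have hdiffz : z' = z + (Amat T m).mulVec ((y : Fin n → ℚ_[p]) - (x : Fin n → ℚ_[p])) := by
      rw [hzdef, hz'def, Matrix.mulVec_sub]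
      abel
    have hAxy : ‖(Amat T m).mulVec ((y : Fin n → ℚ_[p]) - (x : Fin n → ℚ_[p]))‖ < ‖z‖ := by
      calc ‖(Amat T m).mulVec ((y : Fin n → ℚ_[p]) - (x : Fin n → ℚ_[p]))‖
          ≤ Mn T m * ‖(y : Fin n → ℚ_[p]) - (x : Fin n → ℚ_[p])‖ := norm_Amat_mulVec_le T m _
        _ = Mn T m * ‖(x : Fin n → ℚ_[p]) - (y : Fin n → ℚ_[p])‖ := by rw [norm_sub_rev]
        _ < Mn T m * C⁻¹ := mul_lt_mul_of_pos_left hclose hMm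
        _ = C⁻¹ * Mn T m := mul_comm _ _
        _ ≤ ‖z‖ := by rw [hzx]; exact hlowx
    have hzz' : ‖z'‖ = ‖z‖ := by rw [hdiffz, norm_add_eq_left _ _ hAxy]
    obtain ⟨s, hs1, hs2⟩ := nrm_spec z hzne
    have hnx : ((H^[k] x : (Metric.sphere (0 : Fin n → ℚ_[p]) 1)) : Fin n → ℚ_[p])
        = ((p:ℚ_[p])^s) • z := by rw [hxk, nrm, hs2]
    have hny : ((H^[k] y : (Metric.sphere (0 : Fin n → ℚ_[p]) 1)) : Fin n → ℚ_[p])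
        = ((p:ℚ_[p])^s) • z' := by rw [hyk, nrm, hzz', hs2]
    -- distance of the k-th iterates
    have hdistk : ‖((H^[k] x : (Metric.sphere (0 : Fin n → ℚ_[p]) 1)) : Fin n → ℚ_[p])
        - ((H^[k] y : (Metric.sphere (0 : Fin n → ℚ_[p]) 1)) : Fin n → ℚ_[p])‖ < C⁻¹ := by
      have hpb := (pair_bounds T hn C hC1 hC m _ _ W hxu hyu hWb hclose).1
      rw [hxk, hyk]
      refine lt_of_le_of_lt hpb ?_
      calc C * ‖(x : Fin n → ℚ_[p]) - (y : Fin n → ℚ_[p])‖ ≤ C * ρ := by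
            apply mul_le_mul_of_nonneg_left hxy.le (le_of_lt hC0)
        _ < C⁻¹ := hCρ
    have hee := hel (H^[k] x) (H^[k] y) hdistk
    -- the new perturbation
    set enew : Fin n → ℚ_[p] := ((p:ℚ_[p])^(-s)) •
      e ((H^[k] x : (Metric.sphere (0 : Fin n → ℚ_[p]) 1)) : Fin n → ℚ_[p]) with henewdef
    have hnorms : ‖((p:ℚ_[p])^(-s))‖ = ‖z‖ := by
      rw [norm_p_zpow, neg_neg, ← hs1]
    have hnews : ‖enew‖ ≤ εm * Mn T m := by
      rw [henewdef, norm_smul, hnorms]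
      calc ‖z‖ * ‖e ((H^[k] x : (Metric.sphere (0 : Fin n → ℚ_[p]) 1)) : Fin n → ℚ_[p])‖
          ≤ ‖z‖ * εm := mul_le_mul_of_nonneg_left (heb _) (le_of_lt hzpos)
        _ ≤ Mn T m * εm := by
            apply mul_le_mul_of_nonneg_right _ hεm0
            rw [hzx]
            exact norm_mulVec_unit_le T m _ hxu
        _ = εm * Mn T m := mul_comm _ _
    set u' : ℕ → (Fin n → ℚ_[p]) := Function.update u k enew with hu'def
    have hub' : ∀ j : ℕ, ‖u' j‖ ≤ εm * Mn T (σ*j) := by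
      intro j
      rcases eq_or_ne j k with h | h
      · rw [hu'def, h, Function.update_self]
        rw [← hmdef]
        exact hnews
      · rw [hu'def, Function.update_of_ne h]
        exact hub j
    -- the new accumulated perturbation
    have hWnew : Wsum T σ u' (k+1) = (Amat T σ).mulVec W + enew := by
      rw [Wsum, Finset.sum_range_succ]
      have h1 : ∀ j ∈ Finset.range k, (Amat T (σ*(((k+1:ℕ):ℤ)-1-(j:ℤ)))).mulVec (u' j)
          = (Amat T (σ + σ*((k:ℤ)-1-(j:ℤ)))).mulVec (u j) := by
        intro j hj
        have hjk : j ≠ k := ne_of_lt (Finset.mem_range.1 hj)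
        rw [hu'def, Function.update_of_ne hjk]
        congr 2
        push_cast
        ring
      rw [Finset.sum_congr rfl h1]
      have h2 : (Amat T (σ*(((k+1:ℕ):ℤ)-1-(k:ℤ)))).mulVec (u' k) = enew := by
        have h3 : σ*(((k+1:ℕ):ℤ)-1-(k:ℤ)) = 0 := by push_cast; ring
        rw [h3, Amat_zero, Matrix.one_mulVec, hu'def, Function.update_self]
      rw [h2]
      congr 1
      rw [hWdef, Wsum, mulVec_sum]
      symm
      apply Finset.sum_congr rfl
      intro j _
      rw [Amat_mulVec]
    -- nonvanishing of the new inner vector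
    set wx : Fin n → ℚ_[p] := (Amat T σ).mulVec z + enew with hwxdef
    set wy : Fin n → ℚ_[p] := (Amat T σ).mulVec z' + enew with hwydef
    have hlowz : (Mn T (-σ))⁻¹ * ‖z‖ ≤ ‖(Amat T σ).mulVec z‖ := norm_Amat_mulVec_ge T hn σ z
    have hlowz' : (Mn T (-σ))⁻¹ * ‖z'‖ ≤ ‖(Amat T σ).mulVec z'‖ := norm_Amat_mulVec_ge T hn σ z'
    have hm1inv : m1⁻¹ ≤ (Mn T (-σ))⁻¹ := by
      apply inv_anti₀ (Mn_pos T hn (-σ)) hMσ'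
    have hsmall : ‖enew‖ < m1⁻¹ * (C⁻¹ * Mn T m) := by
      refine lt_of_le_of_lt hnews ?_
      have h1 : εm * m1 * C < 1 := by
        refine lt_of_le_of_lt ?_ hεm
        rw [show εm * (C * m1 * C) = εm * m1 * C * C from by ring]
        exact le_mul_of_one_le_right (by positivity) hC1
      have h2 : εm < m1⁻¹ * C⁻¹ := by
        calc εm = (εm * m1 * C) * (m1⁻¹ * C⁻¹) := by field_simp
          _ < 1 * (m1⁻¹ * C⁻¹) := mul_lt_mul_of_pos_right h1 (by positivity)
          _ = m1⁻¹ * C⁻¹ := one_mul _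
      calc εm * Mn T m < (m1⁻¹ * C⁻¹) * Mn T m := mul_lt_mul_of_pos_right h2 hMm
        _ = m1⁻¹ * (C⁻¹ * Mn T m) := by ring
    have hzlow2 : m1⁻¹ * (C⁻¹ * Mn T m) ≤ ‖(Amat T σ).mulVec z‖ := by
      refine le_trans ?_ hlowz
      have h1 : C⁻¹ * Mn T m ≤ ‖z‖ := by rw [hzx]; exact hlowx
      calc m1⁻¹ * (C⁻¹ * Mn T m) ≤ m1⁻¹ * ‖z‖ :=
            mul_le_mul_of_nonneg_left h1 (by positivity)
        _ ≤ (Mn T (-σ))⁻¹ * ‖z‖ := mul_le_mul_of_nonneg_right hm1inv (norm_nonneg _)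
    have hz'low2 : m1⁻¹ * (C⁻¹ * Mn T m) ≤ ‖(Amat T σ).mulVec z'‖ := by
      refine le_trans ?_ hlowz'
      have h1 : C⁻¹ * Mn T m ≤ ‖z'‖ := by rw [hzz', hzx]; exact hlowx
      calc m1⁻¹ * (C⁻¹ * Mn T m) ≤ m1⁻¹ * ‖z'‖ :=
            mul_le_mul_of_nonneg_left h1 (by positivity)
        _ ≤ (Mn T (-σ))⁻¹ * ‖z'‖ := mul_le_mul_of_nonneg_right hm1inv (norm_nonneg _)
    have hwxnorm : ‖wx‖ = ‖(Amat T σ).mulVec z‖ :=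
      norm_add_eq_left _ _ (lt_of_lt_of_le hsmall hzlow2)
    have hwynorm : ‖wy‖ = ‖(Amat T σ).mulVec z'‖ :=
      norm_add_eq_left _ _ (lt_of_lt_of_le hsmall hz'low2)
    have hwxpos : 0 < ‖wx‖ := by
      rw [hwxnorm]; exact lt_of_lt_of_le (by positivity) hzlow2
    have hwypos : 0 < ‖wy‖ := by
      rw [hwynorm]; exact lt_of_lt_of_le (by positivity) hz'low2
    have hwxne : wx ≠ 0 := fun h => by rw [h, norm_zero] at hwxpos; linarith
    have hwyne : wy ≠ 0 := fun h => by rw [h, norm_zero] at hwypos; linarith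
    -- the key smul identity
    have hAx1 : (Amat T σ).mulVec
        ((H^[k] x : (Metric.sphere (0 : Fin n → ℚ_[p]) 1)) : Fin n → ℚ_[p])
        = ((p:ℚ_[p])^s) • (Amat T σ).mulVec z := by
      rw [hnx, Matrix.mulVec_smul]
    have hAy1 : (Amat T σ).mulVec
        ((H^[k] y : (Metric.sphere (0 : Fin n → ℚ_[p]) 1)) : Fin n → ℚ_[p])
        = ((p:ℚ_[p])^s) • (Amat T σ).mulVec z' := by
      rw [hny, Matrix.mulVec_smul]
    have hsmulx : (Amat T σ).mulVec
        ((H^[k] x : (Metric.sphere (0 : Fin n → ℚ_[p]) 1)) : Fin n → ℚ_[p])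
        + e ((H^[k] x : (Metric.sphere (0 : Fin n → ℚ_[p]) 1)) : Fin n → ℚ_[p])
        = ((p:ℚ_[p])^s) • wx := by
      rw [hAx1, hwxdef, henewdef, smul_add, smul_smul,
        ← zpow_add₀ hpne, add_neg_cancel, zpow_zero, one_smul]
    have hsmuly : (Amat T σ).mulVec
        ((H^[k] y : (Metric.sphere (0 : Fin n → ℚ_[p]) 1)) : Fin n → ℚ_[p])
        + e ((H^[k] y : (Metric.sphere (0 : Fin n → ℚ_[p]) 1)) : Fin n → ℚ_[p])
        = ((p:ℚ_[p])^s) • wy := by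
      rw [hAy1, ← hee, hwydef, henewdef, smul_add, smul_smul,
        ← zpow_add₀ hpne, add_neg_cancel, zpow_zero, one_smul]
    -- decompose wx and wy
    have hwx2 : wx = (Amat T (σ*((k+1:ℕ):ℤ))).mulVec (x : Fin n → ℚ_[p]) + Wsum T σ u' (k+1) := by
      rw [hwxdef, hzdef, Matrix.mulVec_add, hWnew, Amat_mulVec]
      have h1 : σ + m = σ*((k+1:ℕ):ℤ) := by rw [hmdef]; push_cast; ring
      rw [h1]
      abel
    have hwy2 : wy = (Amat T (σ*((k+1:ℕ):ℤ))).mulVec (y : Fin n → ℚ_[p]) + Wsum T σ u' (k+1) := by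
      rw [hwydef, hz'def, Matrix.mulVec_add, hWnew, Amat_mulVec]
      have h1 : σ + m = σ*((k+1:ℕ):ℤ) := by rw [hmdef]; push_cast; ring
      rw [h1]
      abel
    refine ⟨u', hub', ?_, ?_⟩
    · rw [Function.iterate_succ_apply', hH (H^[k] x), hsmulx, nrm_smul_zpow _ hwxne s, hwx2]
    · rw [Function.iterate_succ_apply', hH (H^[k] y), hsmuly, nrm_smul_zpow _ hwyne s, hwy2]

include hn hC1 hC hm11 hεm0 hεm hρC hMσ hMσ' hH heb hel in
lemma iter_bounds (x y : (Metric.sphere (0 : Fin n → ℚ_[p]) 1))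
    (hxy : ‖(x : Fin n → ℚ_[p]) - (y : Fin n → ℚ_[p])‖ < ρ) (k : ℕ) :
    ‖((H^[k] x : (Metric.sphere (0 : Fin n → ℚ_[p]) 1)) : Fin n → ℚ_[p])
      - ((H^[k] y : (Metric.sphere (0 : Fin n → ℚ_[p]) 1)) : Fin n → ℚ_[p])‖
      ≤ C * ‖(x : Fin n → ℚ_[p]) - (y : Fin n → ℚ_[p])‖ ∧
    C⁻¹ * ‖(x : Fin n → ℚ_[p]) - (y : Fin n → ℚ_[p])‖
      ≤ ‖((H^[k] x : (Metric.sphere (0 : Fin n → ℚ_[p]) 1)) : Fin n → ℚ_[p])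
      - ((H^[k] y : (Metric.sphere (0 : Fin n → ℚ_[p]) 1)) : Fin n → ℚ_[p])‖ := by
  have hC0 : (0:ℝ) < C := lt_of_lt_of_le one_pos hC1
  have hρ0 : 0 < ρ := lt_of_le_of_lt (norm_nonneg _) hxy
  have hρinv : ρ < C⁻¹ := by
    have h1 : ρ * C < 1 := by
      refine lt_of_le_of_lt ?_ hρC
      rw [show ρ * (C * C) = ρ * C * C from by ring]
      exact le_mul_of_one_le_right (by positivity) hC1
    calc ρ = (ρ * C) * C⁻¹ := by field_simp
      _ < 1 * C⁻¹ := mul_lt_mul_of_pos_right h1 (by positivity)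
      _ = C⁻¹ := one_mul _
  have hclose : ‖(x : Fin n → ℚ_[p]) - (y : Fin n → ℚ_[p])‖ < C⁻¹ := hxy.trans hρinv
  have hxu : ‖(x : Fin n → ℚ_[p])‖ = 1 := mem_sphere_zero_iff_norm.1 x.2
  have hyu : ‖(y : Fin n → ℚ_[p])‖ = 1 := mem_sphere_zero_iff_norm.1 y.2
  obtain ⟨u, hub, hxk, hyk⟩ := iter_form T hn C hC1 hC m1 hm11 εm hεm0 hεm ρ hρC σ hMσ hMσ'
    H e hH heb hel x y hxy k
  have hWb : ‖Wsum T σ u k‖ < C⁻¹ * Mn T (σ*k) :=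
    Wsum_bound T hn C hC1 hC m1 hm11 εm hεm0 hεm σ hMσ' u hub k
  rw [hxk, hyk]
  exact pair_bounds T hn C hC1 hC (σ*k) _ _ _ hxu hyu hWb hclose

end Iter

lemma one_le_mulr {x y : ℝ} (hx : 1 ≤ x) (hy : 1 ≤ y) : 1 ≤ x*y := by nlinarith

section Affine

variable (a : Fin n → ℚ_[p]) (hn : 1 ≤ n) (C m1 ρ : ℝ) (hC1 : 1 ≤ C)
variable (hC : ∀ k : ℤ, Mn T k * Mn T (-k) ≤ C)
variable (hm11 : 1 ≤ m1) (hM1 : Mn T 1 ≤ m1) (hM1' : Mn T (-1) ≤ m1)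
variable (hρ0 : 0 < ρ) (hρK : ρ * (C*C*m1*m1*m1) < 1) (ha : ‖a‖ ≤ ρ)

/-- `T⁻¹ a` -/
noncomputable def bvec : Fin n → ℚ_[p] := (Amat T (-1)).mulVec a

/-- the forward affine sphere map -/
noncomputable def fm (z : Fin n → ℚ_[p]) : Fin n → ℚ_[p] :=
  nrm p (a + (Amat T 1).mulVec z)

/-- the inverse affine sphere map -/
noncomputable def gm (z : Fin n → ℚ_[p]) : Fin n → ℚ_[p] :=
  nrm p ((Amat T (-1)).mulVec z) - bvec T a

/-- the perturbation function for the inverse map -/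
noncomputable def em (z : Fin n → ℚ_[p]) : Fin n → ℚ_[p] :=
  -((realToPadic p ‖(Amat T (-1)).mulVec z‖)⁻¹ • bvec T a)

lemma Amat_one : Amat T 1 = ((T : GL (Fin n) ℚ_[p]) : Matrix (Fin n) (Fin n) ℚ_[p]) := by
  rw [Amat, zpow_one]

lemma Amat_neg_one :
    Amat T (-1) = ((T⁻¹ : GL (Fin n) ℚ_[p]) : Matrix (Fin n) (Fin n) ℚ_[p]) := by
  rw [Amat, zpow_neg_one]

include hn hC1 hC hm11 hM1' hρ0 hρK ha

lemma norm_bvec : ‖bvec T a‖ < 1 := by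
  have hC0 : (0:ℝ) < C := lt_of_lt_of_le one_pos hC1
  have hm10 : (0:ℝ) < m1 := lt_of_lt_of_le one_pos hm11
  have h1 : ‖bvec T a‖ ≤ Mn T (-1) * ‖a‖ := norm_Amat_mulVec_le T (-1) a
  have h2 : Mn T (-1) * ‖a‖ ≤ m1 * ρ :=
    mul_le_mul hM1' ha (norm_nonneg a) (le_of_lt hm10)
  have h3 : m1 * ρ < 1 := by
    have hf : (1:ℝ) ≤ C*C*m1*m1 := one_le_mulr (one_le_mulr (one_le_mulr hC1 hC1) hm11) hm11
    calc m1 * ρ = ρ * m1 := mul_comm _ _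
      _ ≤ (ρ * m1) * (C*C*m1*m1) := le_mul_of_one_le_right (by positivity) hf
      _ = ρ * (C*C*m1*m1*m1) := by ring
      _ < 1 := hρK
  linarith

lemma norm_a_add (z : Fin n → ℚ_[p]) (hz : ‖z‖ = 1) :
    ‖a + (Amat T 1).mulVec z‖ = ‖(Amat T 1).mulVec z‖ := by
  have hC0 : (0:ℝ) < C := lt_of_lt_of_le one_pos hC1
  have hm10 : (0:ℝ) < m1 := lt_of_lt_of_le one_pos hm11
  have hM1inv : m1⁻¹ ≤ Mn T 1 := by
    have h1 := one_le_Mn_mul T hn 1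
    have h2 := Mn_pos T hn 1
    have h3 := Mn_pos T hn (-1)
    rw [inv_le_iff_one_le_mul₀ hm10]
    calc (1:ℝ) ≤ Mn T 1 * Mn T (-1) := h1
      _ ≤ Mn T 1 * m1 := mul_le_mul_of_nonneg_left hM1' (le_of_lt h2)
      _ = Mn T 1 * m1 := rfl
  have hlow : C⁻¹ * m1⁻¹ ≤ ‖(Amat T 1).mulVec z‖ := by
    refine le_trans ?_ (norm_mulVec_unit_ge T hn C hC1 hC 1 z hz)
    exact mul_le_mul_of_nonneg_left hM1inv (by positivity)
  have hsm : ‖a‖ < C⁻¹ * m1⁻¹ := by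
    refine lt_of_le_of_lt ha ?_
    have h1 : ρ * (C * m1) < 1 := by
      have hf : (1:ℝ) ≤ C*m1*m1 := one_le_mulr (one_le_mulr hC1 hm11) hm11
      calc ρ * (C * m1) ≤ (ρ * (C * m1)) * (C*m1*m1) := le_mul_of_one_le_right (by positivity) hf
        _ = ρ * (C*C*m1*m1*m1) := by ring
        _ < 1 := hρK
    calc ρ = (ρ * (C * m1)) * (C⁻¹ * m1⁻¹) := by field_simp
      _ < 1 * (C⁻¹ * m1⁻¹) := mul_lt_mul_of_pos_right h1 (by positivity)
      _ = C⁻¹ * m1⁻¹ := one_mul _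
  rw [add_comm]
  exact norm_add_eq_left _ _ (lt_of_lt_of_le hsm hlow)

lemma fm_norm_one (z : Fin n → ℚ_[p]) (hz : ‖z‖ = 1) : ‖fm T a z‖ = 1 := by
  have hz0 : z ≠ 0 := fun h => by rw [h, norm_zero] at hz; linarith
  have h1 : (Amat T 1).mulVec z ≠ 0 := Amat_mulVec_ne_zero T hn 1 z hz0
  have h2 : a + (Amat T 1).mulVec z ≠ 0 := by
    intro h
    have h3 := norm_a_add T a hn C m1 ρ hC1 hC hm11 hM1' hρ0 hρK ha z hz
    rw [h, norm_zero] at h3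
    exact h1 (norm_eq_zero.mp h3.symm)
  exact norm_nrm _ h2

lemma gm_norm_one (z : Fin n → ℚ_[p]) (hz : ‖z‖ = 1) : ‖gm T a z‖ = 1 := by
  have hz0 : z ≠ 0 := fun h => by rw [h, norm_zero] at hz; linarith
  have h1 : (Amat T (-1)).mulVec z ≠ 0 := Amat_mulVec_ne_zero T hn (-1) z hz0
  have h2 : ‖nrm p ((Amat T (-1)).mulVec z)‖ = 1 := norm_nrm _ h1
  rw [gm, sub_eq_add_neg, norm_add_eq_left _ _ ?_, h2]
  rw [norm_neg, h2]
  exact norm_bvec T a hn C m1 ρ hC1 hC hm11 hM1' hρ0 hρK ha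

lemma gm_fm (z : Fin n → ℚ_[p]) (hz : ‖z‖ = 1) : gm T a (fm T a z) = z := by
  have hz0 : z ≠ 0 := fun h => by rw [h, norm_zero] at hz; linarith
  have hu0 : a + (Amat T 1).mulVec z ≠ 0 := by
    intro h
    have h3 := norm_a_add T a hn C m1 ρ hC1 hC hm11 hM1' hρ0 hρK ha z hz
    rw [h, norm_zero] at h3
    exact Amat_mulVec_ne_zero T hn 1 z hz0 (norm_eq_zero.mp h3.symm)
  obtain ⟨s, hs1, hs2⟩ := nrm_spec (a + (Amat T 1).mulVec z) hu0
  have hfm : fm T a z = ((p:ℚ_[p])^s) • (a + (Amat T 1).mulVec z) := by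
    rw [fm, nrm, hs2]
  have hzb : ‖z + bvec T a‖ = 1 := by
    rw [norm_add_eq_left _ _ ?_, hz]
    rw [hz]
    exact norm_bvec T a hn C m1 ρ hC1 hC hm11 hM1' hρ0 hρK ha
  have hzbne : z + bvec T a ≠ 0 := fun h => by
    rw [h, norm_zero] at hzb; linarith
  have hA : (Amat T (-1)).mulVec (fm T a z) = ((p:ℚ_[p])^s) • (z + bvec T a) := by
    rw [hfm, Matrix.mulVec_smul, Matrix.mulVec_add, Amat_mulVec, neg_add_cancel, Amat_zero,
      Matrix.one_mulVec]
    rw [show (Amat T (-1)).mulVec a = bvec T a from rfl]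
    rw [add_comm]
  rw [gm, hA, nrm_smul_zpow _ hzbne s, nrm_of_norm_one _ hzb, add_sub_cancel_right]

lemma fm_gm (z : Fin n → ℚ_[p]) (hz : ‖z‖ = 1) : fm T a (gm T a z) = z := by
  have hz0 : z ≠ 0 := fun h => by rw [h, norm_zero] at hz; linarith
  have hw0 : (Amat T (-1)).mulVec z ≠ 0 := Amat_mulVec_ne_zero T hn (-1) z hz0
  obtain ⟨s, hs1, hs2⟩ := nrm_spec ((Amat T (-1)).mulVec z) hw0
  have hgm : gm T a z = ((p:ℚ_[p])^s) • ((Amat T (-1)).mulVec z) - bvec T a := by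
    rw [gm, nrm, hs2]
  have hA : a + (Amat T 1).mulVec (gm T a z) = ((p:ℚ_[p])^s) • z := by
    rw [hgm, Matrix.mulVec_sub, Matrix.mulVec_smul, Amat_mulVec, add_neg_cancel, Amat_zero,
      Matrix.one_mulVec]
    rw [show (Amat T 1).mulVec (bvec T a) = a from ?_]
    · abel
    · rw [bvec, Amat_mulVec, add_neg_cancel, Amat_zero, Matrix.one_mulVec]
  rw [fm, hA, nrm_smul_zpow _ hz0 s, nrm_of_norm_one _ hz]

/-- `gm` in perturbation form -/
lemma gm_form (z : Fin n → ℚ_[p]) (hz : ‖z‖ = 1) :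
    gm T a z = nrm p ((Amat T (-1)).mulVec z + em T a z) := by
  have hz0 : z ≠ 0 := fun h => by rw [h, norm_zero] at hz; linarith
  have hw0 : (Amat T (-1)).mulVec z ≠ 0 := Amat_mulVec_ne_zero T hn (-1) z hz0
  obtain ⟨s, hs1, hs2⟩ := nrm_spec ((Amat T (-1)).mulVec z) hw0
  have hpne : ((p:ℚ_[p])) ≠ 0 := by exact_mod_cast hp.out.ne_zero
  have hgmz : ‖gm T a z‖ = 1 := gm_norm_one T a hn C m1 ρ hC1 hC hm11 hM1' hρ0 hρK ha z hz
  have hgm0 : gm T a z ≠ 0 := fun h => by rw [h, norm_zero] at hgmz; linarith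
  have hem : em T a z = -(((p:ℚ_[p])^(-s)) • bvec T a) := by
    rw [em, hs2, ← zpow_neg]
  have h1 : (Amat T (-1)).mulVec z + em T a z = ((p:ℚ_[p])^(-s)) • gm T a z := by
    rw [hem, gm, nrm, hs2, smul_sub, smul_smul, ← zpow_add₀ hpne, neg_add_cancel, zpow_zero,
      one_smul]
    abel
  rw [h1, nrm_smul_zpow _ hgm0 (-s), nrm_of_norm_one _ hgmz]

lemma em_bound (z : Fin n → ℚ_[p]) (hz : ‖z‖ = 1) : ‖em T a z‖ ≤ m1 * m1 * ρ := by
  have hm10 : (0:ℝ) < m1 := lt_of_lt_of_le one_pos hm11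
  have hz0 : z ≠ 0 := fun h => by rw [h, norm_zero] at hz; linarith
  have hw0 : (Amat T (-1)).mulVec z ≠ 0 := Amat_mulVec_ne_zero T hn (-1) z hz0
  obtain ⟨s, hs1, hs2⟩ := nrm_spec ((Amat T (-1)).mulVec z) hw0
  rw [em, hs2, ← zpow_neg, norm_neg, norm_smul, norm_p_zpow, neg_neg, ← hs1]
  have h1 : ‖(Amat T (-1)).mulVec z‖ ≤ m1 := by
    refine le_trans (norm_mulVec_unit_le T (-1) z hz) hM1'
  have h2 : ‖bvec T a‖ ≤ m1 * ρ := by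
    refine le_trans (norm_Amat_mulVec_le T (-1) a) ?_
    exact mul_le_mul hM1' ha (norm_nonneg a) (le_of_lt hm10)
  calc ‖(Amat T (-1)).mulVec z‖ * ‖bvec T a‖ ≤ m1 * (m1 * ρ) :=
        mul_le_mul h1 h2 (norm_nonneg _) (le_of_lt hm10)
    _ = m1 * m1 * ρ := by ring

lemma em_local (z w : Fin n → ℚ_[p]) (hz : ‖z‖ = 1) (hw : ‖w‖ = 1)
    (hzw : ‖z - w‖ < C⁻¹) : em T a z = em T a w := by
  have hM1n := Mn_pos T hn (-1)
  have h1 : ‖(Amat T (-1)).mulVec (z - w)‖ < ‖(Amat T (-1)).mulVec w‖ := by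
    calc ‖(Amat T (-1)).mulVec (z - w)‖ ≤ Mn T (-1) * ‖z - w‖ := norm_Amat_mulVec_le T _ _
      _ < Mn T (-1) * C⁻¹ := mul_lt_mul_of_pos_left hzw hM1n
      _ = C⁻¹ * Mn T (-1) := mul_comm _ _
      _ ≤ ‖(Amat T (-1)).mulVec w‖ := norm_mulVec_unit_ge T hn C hC1 hC (-1) w hw
  have h2 : ‖(Amat T (-1)).mulVec z‖ = ‖(Amat T (-1)).mulVec w‖ := by
    have h3 : (Amat T (-1)).mulVec z
        = (Amat T (-1)).mulVec w + (Amat T (-1)).mulVec (z - w) := by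
      rw [Matrix.mulVec_sub]
      abel
    rw [h3, norm_add_eq_left _ _ h1]
  rw [em, em, h2]

lemma fm_continuous : Continuous (fun z : (Metric.sphere (0 : Fin n → ℚ_[p]) 1) =>
    fm T a (z : Fin n → ℚ_[p])) := by
  rw [continuous_iff_continuousAt]
  intro X
  have hXu : ‖(X : Fin n → ℚ_[p])‖ = 1 := mem_sphere_zero_iff_norm.1 X.2
  have hX0 : (X : Fin n → ℚ_[p]) ≠ 0 := fun h => by rw [h, norm_zero] at hXu; linarith
  have hM1pos := Mn_pos T hn 1
  have hnaX : ‖a + (Amat T 1).mulVec (X : Fin n → ℚ_[p])‖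
      = ‖(Amat T 1).mulVec (X : Fin n → ℚ_[p])‖ :=
    norm_a_add T a hn C m1 ρ hC1 hC hm11 hM1' hρ0 hρK ha _ hXu
  have hpos : 0 < ‖a + (Amat T 1).mulVec (X : Fin n → ℚ_[p])‖ := by
    rw [hnaX]
    rw [norm_pos_iff]
    exact Amat_mulVec_ne_zero T hn 1 _ hX0
  set r : ℝ := (Mn T 1)⁻¹ * ‖a + (Amat T 1).mulVec (X : Fin n → ℚ_[p])‖ with hrdef
  have hr0 : 0 < r := by positivity
  set γ : ℚ_[p] := realToPadic p ‖a + (Amat T 1).mulVec (X : Fin n → ℚ_[p])‖ with hγdef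
  have hconst : ∀ z : (Metric.sphere (0 : Fin n → ℚ_[p]) 1),
      ‖(z : Fin n → ℚ_[p]) - (X : Fin n → ℚ_[p])‖ < r →
      fm T a (z : Fin n → ℚ_[p]) = γ • (a + (Amat T 1).mulVec (z : Fin n → ℚ_[p])) := by
    intro z hzr
    have h1 : ‖(Amat T 1).mulVec ((z : Fin n → ℚ_[p]) - (X : Fin n → ℚ_[p]))‖
        < ‖a + (Amat T 1).mulVec (X : Fin n → ℚ_[p])‖ := by
      calc ‖(Amat T 1).mulVec ((z : Fin n → ℚ_[p]) - (X : Fin n → ℚ_[p]))‖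
          ≤ Mn T 1 * ‖(z : Fin n → ℚ_[p]) - (X : Fin n → ℚ_[p])‖ := norm_Amat_mulVec_le T _ _
        _ < Mn T 1 * r := mul_lt_mul_of_pos_left hzr hM1pos
        _ = ‖a + (Amat T 1).mulVec (X : Fin n → ℚ_[p])‖ := by
            rw [hrdef]
            field_simp
    have h2 : a + (Amat T 1).mulVec (z : Fin n → ℚ_[p])
        = (a + (Amat T 1).mulVec (X : Fin n → ℚ_[p]))
          + (Amat T 1).mulVec ((z : Fin n → ℚ_[p]) - (X : Fin n → ℚ_[p])) := by
      rw [Matrix.mulVec_sub]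
      abel
    have h3 : ‖a + (Amat T 1).mulVec (z : Fin n → ℚ_[p])‖
        = ‖a + (Amat T 1).mulVec (X : Fin n → ℚ_[p])‖ := by
      rw [h2, norm_add_eq_left _ _ h1]
    rw [fm, nrm, h3]
  have hcont2 : Continuous (fun z : (Metric.sphere (0 : Fin n → ℚ_[p]) 1) =>
      γ • (a + (Amat T 1).mulVec (z : Fin n → ℚ_[p]))) := by
    refine Continuous.const_smul (g := fun z : (Metric.sphere (0 : Fin n → ℚ_[p]) 1) =>
      a + (Amat T 1).mulVec (z : Fin n → ℚ_[p])) ?_ γ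
    apply Continuous.add continuous_const
    apply continuous_pi
    intro i
    have h4 : (fun z : (Metric.sphere (0 : Fin n → ℚ_[p]) 1) =>
        (Amat T 1).mulVec (z : Fin n → ℚ_[p]) i)
        = fun z : (Metric.sphere (0 : Fin n → ℚ_[p]) 1) =>
          ∑ j, Amat T 1 i j * (z : Fin n → ℚ_[p]) j := by
      funext z
      rw [Matrix.mulVec, dotProduct]
    rw [h4]
    apply continuous_finset_sum
    intro j _
    exact continuous_const.mul ((continuous_apply j).comp continuous_subtype_val)
  apply hcont2.continuousAt.congr
  have hmem : {z : (Metric.sphere (0 : Fin n → ℚ_[p]) 1) |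
      ‖(z : Fin n → ℚ_[p]) - (X : Fin n → ℚ_[p])‖ < r} ∈ nhds X := by
    have hopen : IsOpen {z : (Metric.sphere (0 : Fin n → ℚ_[p]) 1) |
        ‖(z : Fin n → ℚ_[p]) - (X : Fin n → ℚ_[p])‖ < r} := by
      have h5 : {z : (Metric.sphere (0 : Fin n → ℚ_[p]) 1) |
          ‖(z : Fin n → ℚ_[p]) - (X : Fin n → ℚ_[p])‖ < r}
          = (Subtype.val) ⁻¹' (Metric.ball (X : Fin n → ℚ_[p]) r) := by
        ext z
        simp [Metric.mem_ball, dist_eq_norm, Subtype.dist_eq]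
      rw [h5]
      exact Metric.isOpen_ball.preimage continuous_subtype_val
    apply hopen.mem_nhds
    show ‖(X : Fin n → ℚ_[p]) - (X : Fin n → ℚ_[p])‖ < r
    rw [sub_self, norm_zero]
    exact hr0
  apply Filter.eventuallyEq_of_mem hmem
  intro z hz
  exact (hconst z hz).symm

lemma exists_homeo : ∃ F : (Metric.sphere (0 : Fin n → ℚ_[p]) 1) ≃ₜ
    (Metric.sphere (0 : Fin n → ℚ_[p]) 1),
    (∀ x : (Metric.sphere (0 : Fin n → ℚ_[p]) 1), (F x : Fin n → ℚ_[p]) = fm T a x) ∧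
    (∀ z : (Metric.sphere (0 : Fin n → ℚ_[p]) 1), (F.symm z : Fin n → ℚ_[p]) = gm T a z) := by
  haveI : CompactSpace (Metric.sphere (0 : Fin n → ℚ_[p]) 1) := by
    rw [← isCompact_iff_compactSpace]
    exact (isCompact_closedBall (0 : Fin n → ℚ_[p]) 1).of_isClosed_subset
      Metric.isClosed_sphere Metric.sphere_subset_closedBall
  set E : (Metric.sphere (0 : Fin n → ℚ_[p]) 1) ≃ (Metric.sphere (0 : Fin n → ℚ_[p]) 1) :=
    { toFun := fun z => ⟨fm T a z, mem_sphere_zero_iff_norm.mpr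
        (fm_norm_one T a hn C m1 ρ hC1 hC hm11 hM1' hρ0 hρK ha _
          (mem_sphere_zero_iff_norm.1 z.2))⟩
      invFun := fun z => ⟨gm T a z, mem_sphere_zero_iff_norm.mpr
        (gm_norm_one T a hn C m1 ρ hC1 hC hm11 hM1' hρ0 hρK ha _
          (mem_sphere_zero_iff_norm.1 z.2))⟩
      left_inv := fun z => Subtype.ext
        (gm_fm T a hn C m1 ρ hC1 hC hm11 hM1' hρ0 hρK ha _ (mem_sphere_zero_iff_norm.1 z.2))
      right_inv := fun z => Subtype.ext
        (fm_gm T a hn C m1 ρ hC1 hC hm11 hM1' hρ0 hρK ha _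
          (mem_sphere_zero_iff_norm.1 z.2)) } with hEdef
  have hcontE : Continuous E := by
    apply Continuous.subtype_mk
    exact fm_continuous T a hn C m1 ρ hC1 hC hm11 hM1' hρ0 hρK ha
  refine ⟨hcontE.homeoOfEquivCompactToT2 (f := E), fun x => rfl, fun z => rfl⟩

omit hn hC1 hC hm11 hM1' hρ0 hρK ha in
lemma zpow_apply_pos (F : (Metric.sphere (0 : Fin n → ℚ_[p]) 1) ≃ₜ
    (Metric.sphere (0 : Fin n → ℚ_[p]) 1)) (m : ℕ) (Z : (Metric.sphere (0 : Fin n → ℚ_[p]) 1)) :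
    (F.toEquiv ^ (m:ℤ)) Z = (⇑F)^[m] Z := by
  rw [zpow_natCast, Equiv.Perm.coe_pow]
  rfl

omit hn hC1 hC hm11 hM1' hρ0 hρK ha in
lemma zpow_apply_neg (F : (Metric.sphere (0 : Fin n → ℚ_[p]) 1) ≃ₜ
    (Metric.sphere (0 : Fin n → ℚ_[p]) 1)) (m : ℕ) (Z : (Metric.sphere (0 : Fin n → ℚ_[p]) 1)) :
    (F.toEquiv ^ (Int.negSucc m)) Z = (⇑F.symm)^[m+1] Z := by
  rw [zpow_negSucc, ← inv_pow, Equiv.Perm.coe_pow]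
  rfl

omit hn hC1 hC hm11 hM1' hρ0 hρK ha in
lemma zpow_apply_cancel (F : (Metric.sphere (0 : Fin n → ℚ_[p]) 1) ≃ₜ
    (Metric.sphere (0 : Fin n → ℚ_[p]) 1)) (k : ℤ) (Z : (Metric.sphere (0 : Fin n → ℚ_[p]) 1)) :
    (F.toEquiv ^ (-k)) ((F.toEquiv ^ k) Z) = Z := by
  rw [← Equiv.Perm.mul_apply, ← zpow_add, neg_add_cancel, zpow_zero, Equiv.Perm.one_apply]

include hM1 in
lemma separation (F : (Metric.sphere (0 : Fin n → ℚ_[p]) 1) ≃ₜ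
    (Metric.sphere (0 : Fin n → ℚ_[p]) 1))
    (hFf : ∀ x : (Metric.sphere (0 : Fin n → ℚ_[p]) 1), (F x : Fin n → ℚ_[p]) = fm T a x)
    (hFs : ∀ z : (Metric.sphere (0 : Fin n → ℚ_[p]) 1), (F.symm z : Fin n → ℚ_[p]) = gm T a z)
    (X Y : (Metric.sphere (0 : Fin n → ℚ_[p]) 1)) (hXY : X ≠ Y) :
    ∃ c : ℝ, 0 < c ∧ ∀ k : ℤ,
      c ≤ ‖(((F.toEquiv^k) X : (Metric.sphere (0 : Fin n → ℚ_[p]) 1)) : Fin n → ℚ_[p])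
        - (((F.toEquiv^k) Y : (Metric.sphere (0 : Fin n → ℚ_[p]) 1)) : Fin n → ℚ_[p])‖ := by
  have hC0 : (0:ℝ) < C := lt_of_lt_of_le one_pos hC1
  have hm10 : (0:ℝ) < m1 := lt_of_lt_of_le one_pos hm11
  set εm : ℝ := m1 * m1 * ρ with hεmdef
  have hεm0 : 0 ≤ εm := by positivity
  have hεm : εm * (C * m1 * C) < 1 := by
    rw [show εm * (C * m1 * C) = ρ * (C*C*m1*m1*m1) from by rw [hεmdef]; ring]
    exact hρK
  have hρC : ρ * (C * C) < 1 := by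
    refine lt_of_le_of_lt ?_ hρK
    rw [show ρ * (C*C*m1*m1*m1) = (ρ * (C * C)) * (m1*m1*m1) from by ring]
    exact le_mul_of_one_le_right (by positivity) (one_le_mulr (one_le_mulr hm11 hm11) hm11)
  -- hypotheses for the forward map
  have hH1 : ∀ z : (Metric.sphere (0 : Fin n → ℚ_[p]) 1),
      ((F z : Fin n → ℚ_[p])) = nrm p ((Amat T 1).mulVec (z : Fin n → ℚ_[p]) + a) := by
    intro z
    rw [hFf z, fm, add_comm]
  have heb1 : ∀ z : (Metric.sphere (0 : Fin n → ℚ_[p]) 1), ‖a‖ ≤ εm := by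
    intro z
    refine le_trans ha ?_
    rw [hεmdef]
    exact le_mul_of_one_le_left (le_of_lt hρ0) (one_le_mulr hm11 hm11)
  -- hypotheses for the backward map
  have hHm : ∀ z : (Metric.sphere (0 : Fin n → ℚ_[p]) 1),
      ((F.symm z : Fin n → ℚ_[p]))
      = nrm p ((Amat T (-1)).mulVec (z : Fin n → ℚ_[p]) + em T a (z : Fin n → ℚ_[p])) := by
    intro z
    rw [hFs z]
    exact gm_form T a hn C m1 ρ hC1 hC hm11 hM1' hρ0 hρK ha _ (mem_sphere_zero_iff_norm.1 z.2)
  have hebm : ∀ z : (Metric.sphere (0 : Fin n → ℚ_[p]) 1),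
      ‖em T a (z : Fin n → ℚ_[p])‖ ≤ εm := by
    intro z
    rw [hεmdef]
    exact em_bound T a hn C m1 ρ hC1 hC hm11 hM1' hρ0 hρK ha _ (mem_sphere_zero_iff_norm.1 z.2)
  have helm : ∀ z w : (Metric.sphere (0 : Fin n → ℚ_[p]) 1),
      ‖(z : Fin n → ℚ_[p]) - (w : Fin n → ℚ_[p])‖ < C⁻¹ →
      em T a (z : Fin n → ℚ_[p]) = em T a (w : Fin n → ℚ_[p]) := by
    intro z w hzw
    exact em_local T a hn C m1 ρ hC1 hC hm11 hM1' hρ0 hρK ha _ _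
      (mem_sphere_zero_iff_norm.1 z.2) (mem_sphere_zero_iff_norm.1 w.2) hzw
  have hM1neg : Mn T (-(1:ℤ)) ≤ m1 := hM1'
  have hM1negneg : Mn T (-(-1:ℤ)) ≤ m1 := by rw [neg_neg]; exact hM1
  -- two-sided bounds for all integer iterates on close pairs
  have hiterb : ∀ (k : ℤ) (Z W : (Metric.sphere (0 : Fin n → ℚ_[p]) 1)),
      ‖(Z : Fin n → ℚ_[p]) - (W : Fin n → ℚ_[p])‖ < ρ →
      (‖(((F.toEquiv^k) Z : (Metric.sphere (0 : Fin n → ℚ_[p]) 1)) : Fin n → ℚ_[p])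
        - (((F.toEquiv^k) W : (Metric.sphere (0 : Fin n → ℚ_[p]) 1)) : Fin n → ℚ_[p])‖
        ≤ C * ‖(Z : Fin n → ℚ_[p]) - (W : Fin n → ℚ_[p])‖ ∧
       C⁻¹ * ‖(Z : Fin n → ℚ_[p]) - (W : Fin n → ℚ_[p])‖
        ≤ ‖(((F.toEquiv^k) Z : (Metric.sphere (0 : Fin n → ℚ_[p]) 1)) : Fin n → ℚ_[p])
        - (((F.toEquiv^k) W : (Metric.sphere (0 : Fin n → ℚ_[p]) 1)) : Fin n → ℚ_[p])‖) := by
    intro k Z W hZW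
    cases k with
    | ofNat m =>
      have hb := iter_bounds T hn C hC1 hC m1 hm11 εm hεm0 hεm ρ hρC 1 hM1 hM1neg
        (⇑F) (fun _ => a) hH1 heb1 (fun z w _ => rfl) Z W hZW m
      rw [show ((Int.ofNat m : ℤ)) = (m:ℤ) from rfl, zpow_apply_pos F m Z,
        zpow_apply_pos F m W]
      exact hb
    | negSucc m =>
      have hb := iter_bounds T hn C hC1 hC m1 hm11 εm hεm0 hεm ρ hρC (-1) hM1' hM1negneg
        (⇑F.symm) (em T a) hHm hebm helm Z W hZW (m+1)
      rw [zpow_apply_neg F m Z, zpow_apply_neg F m W]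
      exact hb
  -- conclusion
  have hd0 : 0 < ‖(X : Fin n → ℚ_[p]) - (Y : Fin n → ℚ_[p])‖ := by
    rw [norm_pos_iff, sub_ne_zero]
    exact fun h => hXY (Subtype.coe_injective h)
  refine ⟨min (C⁻¹ * ‖(X : Fin n → ℚ_[p]) - (Y : Fin n → ℚ_[p])‖) (C⁻¹ * ρ), ?_, ?_⟩
  · apply lt_min (by positivity) (by positivity)
  intro k
  by_cases hsm : ‖(X : Fin n → ℚ_[p]) - (Y : Fin n → ℚ_[p])‖ < ρ
  · exact le_trans (min_le_left _ _) ((hiterb k X Y hsm).2)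
  · by_contra hlt
    push_neg at hlt
    have hCinv1 : C⁻¹ ≤ 1 := by
      rw [inv_le_one_iff₀]
      right
      exact hC1
    have h1 : ‖(((F.toEquiv^k) X : (Metric.sphere (0 : Fin n → ℚ_[p]) 1)) : Fin n → ℚ_[p])
        - (((F.toEquiv^k) Y : (Metric.sphere (0 : Fin n → ℚ_[p]) 1)) : Fin n → ℚ_[p])‖ < ρ := by
      refine lt_of_lt_of_le hlt (le_trans (min_le_right _ _) ?_)
      calc C⁻¹ * ρ ≤ 1 * ρ := mul_le_mul_of_nonneg_right hCinv1 (le_of_lt hρ0)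
        _ = ρ := one_mul _
    have h2 := (hiterb (-k) ((F.toEquiv^k) X) ((F.toEquiv^k) Y) h1).1
    rw [zpow_apply_cancel F k X, zpow_apply_cancel F k Y] at h2
    have h3 : ‖(X : Fin n → ℚ_[p]) - (Y : Fin n → ℚ_[p])‖ < ρ := by
      refine lt_of_le_of_lt h2 ?_
      have h4 : ‖(((F.toEquiv^k) X : (Metric.sphere (0 : Fin n → ℚ_[p]) 1)) : Fin n → ℚ_[p])
          - (((F.toEquiv^k) Y : (Metric.sphere (0 : Fin n → ℚ_[p]) 1)) : Fin n → ℚ_[p])‖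
          < C⁻¹ * ρ := lt_of_lt_of_le hlt (min_le_right _ _)
      calc C * ‖(((F.toEquiv^k) X : (Metric.sphere (0 : Fin n → ℚ_[p]) 1)) : Fin n → ℚ_[p])
          - (((F.toEquiv^k) Y : (Metric.sphere (0 : Fin n → ℚ_[p]) 1)) : Fin n → ℚ_[p])‖
          < C * (C⁻¹ * ρ) := mul_lt_mul_of_pos_left h4 hC0
        _ = ρ := by field_simp
    exact hsm h3

end Affine

end Stmt15Aux

/-- If `T̄` is distal on the `p`-adic unit sphere, then there is a compact open additive
subgroup `V` of `ℚ_p^n` such that for every nonzero `a ∈ V` we have `‖T⁻¹(a)‖_p < 1`, the map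
`T̄_a` is a homeomorphism of the sphere, and `T̄_a` is distal. -/
theorem stmt15 (p : ℕ) [Fact p.Prime] (n : ℕ) (hn : 1 ≤ n) (T : GL (Fin n) ℚ_[p])
    (hT : ActsDistallyOn {f : (Fin n → ℚ_[p]) → Fin n → ℚ_[p] |
        ∃ k : ℤ, f = sphereMap p ((T ^ k : GL (Fin n) ℚ_[p]) : Matrix (Fin n) (Fin n) ℚ_[p])}
      (Metric.sphere (0 : Fin n → ℚ_[p]) 1)) :
    ∃ V : AddSubgroup (Fin n → ℚ_[p]),
      IsCompact (V : Set (Fin n → ℚ_[p])) ∧ IsOpen (V : Set (Fin n → ℚ_[p])) ∧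
      ∀ a ∈ V, a ≠ 0 →
        ‖((T⁻¹ : GL (Fin n) ℚ_[p]) : Matrix (Fin n) (Fin n) ℚ_[p]).mulVec a‖ < 1 ∧
        ∃ F : (Metric.sphere (0 : Fin n → ℚ_[p]) 1) ≃ₜ (Metric.sphere (0 : Fin n → ℚ_[p]) 1),
          (∀ x : (Metric.sphere (0 : Fin n → ℚ_[p]) 1),
            (F x : Fin n → ℚ_[p]) =
              affineSphereMap p (T : Matrix (Fin n) (Fin n) ℚ_[p]) a x) ∧
          ActsDistally {f : (Metric.sphere (0 : Fin n → ℚ_[p]) 1) →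
              (Metric.sphere (0 : Fin n → ℚ_[p]) 1) |
            ∃ k : ℤ, f = ⇑(F.toEquiv ^ k)} := by
  classical
  obtain ⟨C, hC1, hC⟩ := Stmt15Aux.exists_bound T hn hT
  have hC0 : (0:ℝ) < C := lt_of_lt_of_le one_pos hC1
  set m1 : ℝ := max (max (Stmt15Aux.Mn T 1) (Stmt15Aux.Mn T (-1))) 1 with hm1def
  have hm11 : (1:ℝ) ≤ m1 := le_max_right _ _
  have hM1 : Stmt15Aux.Mn T 1 ≤ m1 := le_max_of_le_left (le_max_left _ _)
  have hM1' : Stmt15Aux.Mn T (-1) ≤ m1 := le_max_of_le_left (le_max_right _ _)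
  have hm10 : (0:ℝ) < m1 := lt_of_lt_of_le one_pos hm11
  -- choose the radius
  have hp1 : (1:ℝ) < (p:ℝ) := Stmt15Aux.p_real_gt_one
  obtain ⟨t, ht⟩ := pow_unbounded_of_one_lt (C*C*m1*m1*m1) hp1
  set ρ : ℝ := ((p:ℝ)^t)⁻¹ with hρdef
  have hρ0 : 0 < ρ := by positivity
  have hρK : ρ * (C*C*m1*m1*m1) < 1 := by
    have h1 : ρ * (C*C*m1*m1*m1) < ρ * ((p:ℝ)^t) := mul_lt_mul_of_pos_left ht hρ0
    have h2 : ρ * ((p:ℝ)^t) = 1 := by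
      rw [hρdef]
      field_simp
    linarith
  -- the compact open subgroup
  refine ⟨{ carrier := {v : Fin n → ℚ_[p] | ‖v‖ ≤ ρ}
            add_mem' := fun hx hy =>
              le_trans (Stmt15Aux.norm_add_le_max _ _) (max_le hx hy)
            zero_mem' := by
              show ‖(0 : Fin n → ℚ_[p])‖ ≤ ρ
              rw [norm_zero]
              exact le_of_lt hρ0
            neg_mem' := by
              intro x hx
              show ‖-x‖ ≤ ρ
              rw [norm_neg]
              exact hx }, ?_, ?_, ?_⟩
  · -- compactness
    have h1 : {v : Fin n → ℚ_[p] | ‖v‖ ≤ ρ} = Metric.closedBall (0 : Fin n → ℚ_[p]) ρ := by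
      ext v
      rw [Metric.mem_closedBall, dist_zero_right]
      rfl
    show IsCompact {v : Fin n → ℚ_[p] | ‖v‖ ≤ ρ}
    rw [h1]
    exact isCompact_closedBall _ _
  · -- openness
    show IsOpen {v : Fin n → ℚ_[p] | ‖v‖ ≤ ρ}
    rw [Metric.isOpen_iff]
    intro v hv
    refine ⟨ρ, hρ0, ?_⟩
    intro w hw
    rw [Metric.mem_ball, dist_eq_norm] at hw
    show ‖w‖ ≤ ρ
    have h2 : w = v + (w - v) := by abel
    rw [h2]
    refine le_trans (Stmt15Aux.norm_add_le_max _ _) (max_le hv (le_of_lt hw))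
  · -- the main statement for each nonzero a
    intro a haV _
    have ha : ‖a‖ ≤ ρ := haV
    constructor
    · -- ‖T⁻¹ a‖ < 1
      have h1 := Stmt15Aux.norm_bvec T a hn C m1 ρ hC1 hC hm11 hM1' hρ0 hρK ha
      rw [Stmt15Aux.bvec, Stmt15Aux.Amat_neg_one] at h1
      exact h1
    · obtain ⟨F, hFf, hFs⟩ :=
        Stmt15Aux.exists_homeo T a hn C m1 ρ hC1 hC hm11 hM1' hρ0 hρK ha
      refine ⟨F, ?_, ?_⟩
      · intro x
        rw [hFf x]
        show Stmt15Aux.fm T a _ = affineSphereMap p _ a _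
        rw [Stmt15Aux.fm, Stmt15Aux.Amat_one]
        rfl
      · -- distality
        intro X Y hXY d
        obtain ⟨c, hc0, hsep⟩ := Stmt15Aux.separation T a hn C m1 ρ hC1 hC hm11 hM1 hM1'
          hρ0 hρK ha F hFf hFs X Y hXY
        intro hmem
        have hclosed : IsClosed {q : (Metric.sphere (0 : Fin n → ℚ_[p]) 1) ×
            (Metric.sphere (0 : Fin n → ℚ_[p]) 1) | c ≤ dist q.1 q.2} :=
          isClosed_le continuous_const (Continuous.dist continuous_fst continuous_snd)
        have hsub : (fun f => (f X, f Y)) '' {f : (Metric.sphere (0 : Fin n → ℚ_[p]) 1) →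
            (Metric.sphere (0 : Fin n → ℚ_[p]) 1) | ∃ k : ℤ, f = ⇑(F.toEquiv ^ k)}
            ⊆ {q : (Metric.sphere (0 : Fin n → ℚ_[p]) 1) ×
              (Metric.sphere (0 : Fin n → ℚ_[p]) 1) | c ≤ dist q.1 q.2} := by
          rintro q ⟨f, ⟨k, rfl⟩, rfl⟩
          show c ≤ dist ((F.toEquiv ^ k) X) ((F.toEquiv ^ k) Y)
          rw [Subtype.dist_eq, dist_eq_norm]
          exact hsep k
        have h3 := closure_minimal hsub hclosed hmem
        simp only [Set.mem_setOf_eq, dist_self] at h3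
        linarith
end

section
/- Let p be a prime, n ≥ 1, T ∈ GL(n, ℚ_p) and a ∈ ℚ_p^n with 0 < ‖T^{-1}(a)‖_p < 1, so that T̄_a : S_n → S_n is a homeomorphism. For x ∈ S_n and j ≥ 1 set α_j(x) = ‖a + T(T̄_a^{j-1}(x))‖_p and β_{j,x} = α_1(x)·α_2(x)⋯α_j(x), with β_{0,x} = 1. Then for every j ≥ 1, T̄_a^j(x) = β_{j,x} T^j(x) + β_{j,x} Σ_{i=1}^{j} β_{j-i,x}^{-1} T^{i-1}(a), where the positive real numbers β_{j,x} and β_{j-i,x}^{-1}, which are integer powers of p, are interpreted as the corresponding rational scalars in ℚ_p. -/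
open scoped MatrixGroups

/-- `α_j(x) = ‖a + T(T̄_a^{j-1}(x))‖_p`, for `j ≥ 1`. -/
noncomputable def alphaSeq (p : ℕ) [Fact p.Prime] {n : ℕ}
    (T : Matrix (Fin n) (Fin n) ℚ_[p]) (a : Fin n → ℚ_[p]) (x : Fin n → ℚ_[p]) (j : ℕ) :
    ℝ :=
  ‖a + T.mulVec ((affineSphereMap p T a)^[j - 1] x)‖

/-- `β_{j,x} = α_1(x) ⋯ α_j(x)`, with `β_{0,x} = 1` (the empty product). -/
noncomputable def betaSeq (p : ℕ) [Fact p.Prime] {n : ℕ}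
    (T : Matrix (Fin n) (Fin n) ℚ_[p]) (a : Fin n → ℚ_[p]) (x : Fin n → ℚ_[p]) (j : ℕ) :
    ℝ :=
  ∏ i ∈ Finset.Icc 1 j, alphaSeq p T a x i

lemma rp_zpow (p : ℕ) [Fact p.Prime] (m : ℤ) :
    realToPadic p ((p : ℝ) ^ m) = (p : ℚ_[p]) ^ m := by
  have hp : (1 : ℝ) < p := by exact_mod_cast (Fact.out : p.Prime).one_lt
  have hlog : Real.log p ≠ 0 := ne_of_gt (Real.log_pos hp)
  unfold realToPadic Real.logb
  rw [Real.log_zpow, mul_div_assoc, div_self hlog, mul_one, Int.floor_intCast]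

lemma exists_zpow_norm (p : ℕ) [Fact p.Prime] {n : ℕ} (v : Fin n → ℚ_[p]) (hv : v ≠ 0) :
    ∃ m : ℤ, ‖v‖ = (p : ℝ) ^ m := by
  cases isEmpty_or_nonempty (Fin n) with
  | inl h => exact absurd (Subsingleton.elim v 0) hv
  | inr h =>
    obtain ⟨i, -, hi⟩ := Finset.exists_mem_eq_sup (Finset.univ : Finset (Fin n))
      Finset.univ_nonempty (fun i => ‖v i‖₊)
    have hnorm : ‖v‖ = ‖v i‖ := by
      rw [Pi.norm_def, hi]; rfl
    have hvi : v i ≠ 0 := by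
      intro h0
      apply hv
      have : ‖v‖ = 0 := by rw [hnorm, h0, norm_zero]
      exact norm_eq_zero.mp this
    exact ⟨-(v i).valuation, by rw [hnorm, Padic.norm_eq_zpow_neg_valuation hvi]⟩

/-- For `T ∈ GL(n, ℚ_p)` and `a` with `0 < ‖T⁻¹(a)‖_p < 1` and `x` in the `p`-adic unit
sphere, for every `j ≥ 1`:
`T̄_a^j(x) = β_{j,x} T^j(x) + β_{j,x} ∑_{i=1}^{j} β_{j-i,x}^{-1} T^{i-1}(a)`,
where the positive real numbers `β_{j,x}` and `β_{j-i,x}^{-1}` (integer powers of `p`) are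
interpreted as the corresponding scalars in `ℚ_p`. -/
theorem stmt19 (p : ℕ) [Fact p.Prime] (n : ℕ) (hn : 1 ≤ n) (T : GL (Fin n) ℚ_[p])
    (a : Fin n → ℚ_[p])
    (ha0 : 0 < ‖((T⁻¹ : GL (Fin n) ℚ_[p]) : Matrix (Fin n) (Fin n) ℚ_[p]).mulVec a‖)
    (ha1 : ‖((T⁻¹ : GL (Fin n) ℚ_[p]) : Matrix (Fin n) (Fin n) ℚ_[p]).mulVec a‖ < 1)
    (x : Fin n → ℚ_[p]) (hx : ‖x‖ = 1) :
    ∀ j : ℕ, 1 ≤ j →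
      (affineSphereMap p (T : Matrix (Fin n) (Fin n) ℚ_[p]) a)^[j] x =
        realToPadic p (betaSeq p (T : Matrix (Fin n) (Fin n) ℚ_[p]) a x j) •
            (((T : Matrix (Fin n) (Fin n) ℚ_[p]) ^ j).mulVec x) +
          realToPadic p (betaSeq p (T : Matrix (Fin n) (Fin n) ℚ_[p]) a x j) •
            ∑ i ∈ Finset.Icc 1 j,
              realToPadic p ((betaSeq p (T : Matrix (Fin n) (Fin n) ℚ_[p]) a x (j - i))⁻¹) •
                (((T : Matrix (Fin n) (Fin n) ℚ_[p]) ^ (i - 1)).mulVec a) := by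
  set A : Matrix (Fin n) (Fin n) ℚ_[p] := (T : Matrix (Fin n) (Fin n) ℚ_[p]) with hA
  set B : Matrix (Fin n) (Fin n) ℚ_[p] :=
    ((T⁻¹ : GL (Fin n) ℚ_[p]) : Matrix (Fin n) (Fin n) ℚ_[p]) with hB
  have hBA : B * A = 1 := T.inv_mul
  have hp1 : (1 : ℝ) < p := by exact_mod_cast (Fact.out : p.Prime).one_lt
  have hp0 : (p : ℝ) ≠ 0 := by positivity
  have hpc : (p : ℚ_[p]) ≠ 0 := by
    exact_mod_cast Nat.cast_ne_zero.mpr (Fact.out : p.Prime).ne_zero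
  have hnz : ∀ y : Fin n → ℚ_[p], ‖y‖ = 1 → a + A.mulVec y ≠ 0 := by
    intro y hy h0
    have ha' : a = -(A.mulVec y) := eq_neg_of_add_eq_zero_left h0
    have hBa : B.mulVec a = -y := by
      rw [ha', Matrix.mulVec_neg, Matrix.mulVec_mulVec, hBA, Matrix.one_mulVec]
    rw [hBa, norm_neg, hy] at ha1
    exact absurd ha1 (lt_irrefl 1)
  have key : ∀ j : ℕ, ‖(affineSphereMap p A a)^[j] x‖ = 1 ∧
      ∃ m : ℤ, betaSeq p A a x j = (p : ℝ) ^ m ∧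
        (affineSphereMap p A a)^[j] x =
          realToPadic p (betaSeq p A a x j) • ((A ^ j).mulVec x) +
            realToPadic p (betaSeq p A a x j) •
              ∑ i ∈ Finset.Icc 1 j,
                realToPadic p ((betaSeq p A a x (j - i))⁻¹) • ((A ^ (i - 1)).mulVec a) := by
    intro j
    induction j with
    | zero =>
      have hb0 : betaSeq p A a x 0 = (p : ℝ) ^ (0 : ℤ) := by
        simp [betaSeq]
      have rp1 : realToPadic p (1 : ℝ) = 1 := by simpa using rp_zpow p 0
      refine ⟨hx, 0, hb0, ?_⟩
      simp [hb0, rp1, Matrix.one_mulVec]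
    | succ j ih =>
      obtain ⟨hy1, m, hβ, hform⟩ := ih
      set y := (affineSphereMap p A a)^[j] x with hy
      have hne : a + A.mulVec y ≠ 0 := hnz y hy1
      obtain ⟨k, hα⟩ := exists_zpow_norm p _ hne
      have halpha : alphaSeq p A a x (j + 1) = ‖a + A.mulVec y‖ := by
        simp [alphaSeq, hy]
      have hβ' : betaSeq p A a x (j + 1) = (p : ℝ) ^ (m + k) := by
        rw [betaSeq, Finset.prod_Icc_succ_top (by omega), ← betaSeq, hβ, halpha, hα,
          ← zpow_add₀ hp0]
      have hiter : (affineSphereMap p A a)^[j + 1] x =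
          realToPadic p ‖a + A.mulVec y‖ • (a + A.mulVec y) := by
        rw [Function.iterate_succ_apply', ← hy]; rfl
      have hnorm1 : ‖(affineSphereMap p A a)^[j + 1] x‖ = 1 := by
        rw [hiter, norm_smul, hα, rp_zpow, Padic.norm_p_zpow, ← zpow_add₀ hp0]
        simp
      refine ⟨hnorm1, m + k, hβ', ?_⟩
      set c : ℚ_[p] := (p : ℚ_[p]) ^ k with hc0
      set b : ℚ_[p] := (p : ℚ_[p]) ^ m with hb0
      set b' : ℚ_[p] := (p : ℚ_[p]) ^ (m + k) with hb'0
      set binv : ℚ_[p] := (p : ℚ_[p]) ^ (-m) with hbinv0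
      have hc : realToPadic p ‖a + A.mulVec y‖ = c := by rw [hα, rp_zpow]
      have hb : realToPadic p (betaSeq p A a x j) = b := by rw [hβ, rp_zpow]
      have hb' : realToPadic p (betaSeq p A a x (j + 1)) = b' := by rw [hβ', rp_zpow]
      have hbinv : realToPadic p ((betaSeq p A a x j)⁻¹) = binv := by
        rw [hβ, ← zpow_neg, rp_zpow]
      have hsum : ∑ i ∈ Finset.Icc 1 (j + 1),
            realToPadic p ((betaSeq p A a x (j + 1 - i))⁻¹) • ((A ^ (i - 1)).mulVec a)
          = binv • a + ∑ i ∈ Finset.Icc 1 j,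
              realToPadic p ((betaSeq p A a x (j - i))⁻¹) •
                (A.mulVec ((A ^ (i - 1)).mulVec a)) := by
        rw [← Finset.Ico_add_one_right_eq_Icc, Finset.sum_Ico_eq_sum_range,
          ← Finset.Ico_add_one_right_eq_Icc, Finset.sum_Ico_eq_sum_range]
        simp only [Nat.add_sub_cancel]
        rw [Finset.sum_range_succ']
        rw [add_comm]
        congr 1
        · simp [hbinv]
        · refine Finset.sum_congr rfl fun i hi => ?_
          have h1 : j + 1 - (1 + (i + 1)) = j - (1 + i) := by omega
          have h2 : 1 + (i + 1) - 1 = (1 + i - 1) + 1 := by omega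
          rw [h1, h2, pow_succ', Matrix.mulVec_mulVec]
      have hAS : A.mulVec (∑ i ∈ Finset.Icc 1 j,
            realToPadic p ((betaSeq p A a x (j - i))⁻¹) • ((A ^ (i - 1)).mulVec a))
          = ∑ i ∈ Finset.Icc 1 j,
              realToPadic p ((betaSeq p A a x (j - i))⁻¹) •
                (A.mulVec ((A ^ (i - 1)).mulVec a)) := by
        simp only [← Matrix.mulVecLin_apply, map_sum, map_smul]
      have h1 : c * b = b' := by
        rw [hc0, hb0, hb'0, ← zpow_add₀ hpc, add_comm]
      have h2 : b' * binv = c := by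
        rw [hc0, hb'0, hbinv0, ← zpow_add₀ hpc]
        congr 1
        ring
      rw [hiter, hc, hb', hsum, hform, hb,
        Matrix.mulVec_add, Matrix.mulVec_smul, Matrix.mulVec_smul, Matrix.mulVec_mulVec,
        ← pow_succ', hAS]
      rw [smul_add, smul_add, smul_add, smul_smul, smul_smul, smul_smul, h1, h2]
      abel
  intro j hj
  exact (key j).2.choose_spec.2
end
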